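/- arXiv:2411.04485 — 6 statements merged into one kernel-verified Lean document; each statement's English description precedes it below -/
import Mathlib

section
/- Let $\mathsf{M}$ be a $d\times d$ integer dilation matrix and $a$ a finitely supported $\mathsf{M}$-interpolatory filter (i.e., $a(\mathsf{M}k) = |\det\mathsf{M}|^{-1}\delta(k)$) with $\widehat{a}(0)=1$. If $a$ has sum rules of order $m$ with respect to $\mathsf{M}$, i.e., all partial derivatives of $\widehat{a}$ of order less than $m$ vanish at $2\pi\omega$ for every $\omega \in \Omega_{\mathsf{M}}\setminus\{0\}$, then $a$ has $m$ linear-phase moments, i.e., $\partial^\mu(\widehat{a}-1)(0) = 0$ for all multi-indices $\mu$ with $|\mu| < m$. -/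
open scoped BigOperators Classical
open Asymptotics Filter Matrix

noncomputable section

/-- Real cast of an integer vector. -/
def zr {d : ℕ} (k : Fin d → ℤ) : Fin d → ℝ := fun i => (k i : ℝ)

/-- Fourier series `û(ξ) = ∑_k u(k) e^{-i k·ξ}` of a filter on `ℤ^d`. -/
def fhat {d : ℕ} (a : (Fin d → ℤ) → ℂ) (ξ : Fin d → ℝ) : ℂ :=
  ∑' k : Fin d → ℤ, a k * Complex.exp (-Complex.I * ((∑ i, (k i : ℝ) * ξ i : ℝ) : ℂ))

/-- `d_M = |det M|`. -/
def dm {d : ℕ} (M : Matrix (Fin d) (Fin d) ℤ) : ℕ := M.det.natAbs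

/-- A dilation matrix: integer matrix whose (complex) eigenvalues all exceed 1 in modulus. -/
def IsDilation {d : ℕ} (M : Matrix (Fin d) (Fin d) ℤ) : Prop :=
  M.det ≠ 0 ∧ ∀ z : ℂ, (M.map (Int.cast : ℤ → ℂ)).charpoly.IsRoot z → 1 < ‖z‖

/-- The real matrix associated with an integer matrix. -/
def Mr {d : ℕ} (M : Matrix (Fin d) (Fin d) ℤ) : Matrix (Fin d) (Fin d) ℝ :=
  M.map (Int.cast : ℤ → ℝ)

/-- `M`-interpolatory filter: `a(Mk) = d_M⁻¹ δ(k)`. -/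
def Interp {d : ℕ} (M : Matrix (Fin d) (Fin d) ℤ) (a : (Fin d → ℤ) → ℂ) : Prop :=
  ∀ k : Fin d → ℤ, a (M.mulVec k) = ((dm M : ℂ))⁻¹ * (if k = 0 then 1 else 0)

/-- Coset filter `u^{[γ,M]}(k) = u(γ + Mk)`. -/
def coset {d : ℕ} (M : Matrix (Fin d) (Fin d) ℤ) (γ : Fin d → ℤ)
    (a : (Fin d → ℤ) → ℂ) : (Fin d → ℤ) → ℂ := fun k => a (γ + M.mulVec k)

/-! ### Auxiliary definitions -/

def dotz {d : ℕ} (k : Fin d → ℤ) (x : Fin d → ℝ) : ℝ := ∑ i, (k i : ℝ) * x i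

def ee (t : ℝ) : ℂ := Complex.exp (-Complex.I * (t : ℂ))

def fr {d : ℕ} (x : Fin d → ℝ) : Fin d → ℝ := fun i => Int.fract (x i)

def flo {d : ℕ} (x : Fin d → ℝ) : Fin d → ℤ := fun i => ⌊x i⌋

/-! ### Basic lemmas -/

lemma zr_inj {d : ℕ} : Function.Injective (zr (d := d)) := by
  intro k l h; funext i
  simpa [zr] using congrFun h i

lemma ee_add (s t : ℝ) : ee (s + t) = ee s * ee t := by
  simp [ee, ← Complex.exp_add]; ring_nf

lemma ee_int (n : ℤ) : ee (2 * Real.pi * n) = 1 := by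
  have : (-Complex.I * ((2 * Real.pi * n : ℝ) : ℂ)) = (-n : ℤ) * (2 * Real.pi * Complex.I) := by
    push_cast; ring
  rw [ee, this, Complex.exp_int_mul_two_pi_mul_I]

lemma ee_ne_one {c : ℝ} (hc : ¬ ∃ n : ℤ, c = n) : ee (2 * Real.pi * c) ≠ 1 := by
  intro h
  rw [ee, Complex.exp_eq_one_iff] at h
  obtain ⟨n, hn⟩ := h
  apply hc
  refine ⟨-n, ?_⟩
  have him := congrArg Complex.im hn
  simp [Complex.mul_im] at him
  have hpi := Real.pi_pos
  push_cast
  nlinarith [him]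

lemma mulVec_cast {d : ℕ} (M : Matrix (Fin d) (Fin d) ℤ) (l : Fin d → ℤ) :
    (Mr M).mulVec (zr l) = zr (M.mulVec l) := by
  funext i
  simp [Mr, zr, Matrix.mulVec, dotProduct]

lemma transpose_cast {d : ℕ} (M : Matrix (Fin d) (Fin d) ℤ) : (Mr M)ᵀ = Mr Mᵀ := rfl

lemma dotz_add {d : ℕ} (k : Fin d → ℤ) (x y : Fin d → ℝ) :
    dotz k (x + y) = dotz k x + dotz k y := by
  simp [dotz, mul_add, Finset.sum_add_distrib]

lemma dotz_sub {d : ℕ} (k : Fin d → ℤ) (x y : Fin d → ℝ) :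
    dotz k (x - y) = dotz k x - dotz k y := by
  simp [dotz, mul_sub, Finset.sum_sub_distrib]

lemma dotz_smul {d : ℕ} (k : Fin d → ℤ) (c : ℝ) (x : Fin d → ℝ) :
    dotz k (c • x) = c * dotz k x := by
  simp [dotz, Finset.mul_sum]; apply Finset.sum_congr rfl; intros; ring

lemma dotz_int {d : ℕ} (k n : Fin d → ℤ) :
    dotz k (zr n) = ((∑ i, k i * n i : ℤ) : ℝ) := by
  simp [dotz, zr]

lemma dotz_dot {d : ℕ} (k : Fin d → ℤ) (x : Fin d → ℝ) : dotz k x = zr k ⬝ᵥ x := rfl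

lemma dotz_mulVec {d : ℕ} (M : Matrix (Fin d) (Fin d) ℤ) (l : Fin d → ℤ) (x : Fin d → ℝ) :
    dotz (M.mulVec l) x = ∑ t, (l t : ℝ) * ((Mr M)ᵀ.mulVec x t) := by
  simp only [dotz, Matrix.mulVec, dotProduct, Matrix.transpose_apply, Mr, Matrix.map_apply]
  push_cast
  simp only [Finset.sum_mul, Finset.mul_sum]
  rw [Finset.sum_comm]
  apply Finset.sum_congr rfl
  intro t _
  apply Finset.sum_congr rfl
  intro i _
  ring

lemma fr_eq {d : ℕ} (x : Fin d → ℝ) : fr x = x - zr (flo x) := by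
  funext i
  simp only [fr, flo, zr, Pi.sub_apply]
  rw [Int.fract]

lemma det_Mr {d : ℕ} (M : Matrix (Fin d) (Fin d) ℤ) (hdet : M.det ≠ 0) :
    IsUnit (Mr M).det := by
  have : (Mr M).det = ((M.det : ℤ) : ℝ) := (RingHom.map_det (Int.castRingHom ℝ) M).symm
  rw [this]
  exact isUnit_iff_ne_zero.mpr (by exact_mod_cast hdet)

lemma exists_preimage {d : ℕ} (M : Matrix (Fin d) (Fin d) ℤ) (hdet : M.det ≠ 0)
    (k : Fin d → ℤ)
    (h : ∀ j : Fin d, ∃ n : ℤ, ((Mr M)⁻¹.mulVec (zr k)) j = n) :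
    ∃ l : Fin d → ℤ, k = M.mulVec l := by
  classical
  choose l hl using h
  refine ⟨l, ?_⟩
  have hy : (Mr M).mulVec ((Mr M)⁻¹.mulVec (zr k)) = zr k := by
    rw [Matrix.mulVec_mulVec, Matrix.mul_nonsing_inv _ (det_Mr M hdet), Matrix.one_mulVec]
  have hyl : (Mr M)⁻¹.mulVec (zr k) = zr l := funext hl
  rw [hyl, mulVec_cast] at hy
  exact (zr_inj hy).symm

/-! ### Lemmas about Ω -/

section Omega
variable {d : ℕ} (M : Matrix (Fin d) (Fin d) ℤ) (Ω : Finset (Fin d → ℝ))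
variable (hΩ : ∀ x : Fin d → ℝ, x ∈ Ω ↔
      ((∃ k : Fin d → ℤ, (Mr M)ᵀ.mulVec x = zr k) ∧ ∀ i, 0 ≤ x i ∧ x i < 1))

include hΩ

lemma zero_mem_Omega : (0 : Fin d → ℝ) ∈ Ω := by
  rw [hΩ]
  refine ⟨⟨0, ?_⟩, fun i => by norm_num⟩
  rw [Matrix.mulVec_zero]
  funext i; simp [zr]

lemma fr_mem_Omega (x : Fin d → ℝ) (hx : ∃ k : Fin d → ℤ, (Mr M)ᵀ.mulVec x = zr k) :
    fr x ∈ Ω := by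
  obtain ⟨k, hk⟩ := hx
  rw [hΩ]
  refine ⟨⟨k - Mᵀ.mulVec (flo x), ?_⟩, fun i => ⟨Int.fract_nonneg _, Int.fract_lt_one _⟩⟩
  rw [fr_eq, Matrix.mulVec_sub, hk, transpose_cast, mulVec_cast]
  funext i
  simp [zr]

lemma dot_int_of_all (hdet : M.det ≠ 0) (k : Fin d → ℤ)
    (hall : ∀ ω ∈ Ω, ∃ n : ℤ, dotz k ω = n) :
    ∃ l : Fin d → ℤ, k = M.mulVec l := by
  apply exists_preimage M hdet k
  intro j
  set A := Mr M with hA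
  set y := A⁻¹.mulVec (zr k) with hyd
  have hdetT : IsUnit (Aᵀ).det := by
    rw [Matrix.det_transpose]; exact det_Mr M hdet
  set x := (Aᵀ)⁻¹.mulVec (zr (Pi.single j 1)) with hxd
  have hAx : Aᵀ.mulVec x = zr (Pi.single j 1) := by
    rw [hxd, Matrix.mulVec_mulVec, Matrix.mul_nonsing_inv _ hdetT, Matrix.one_mulVec]
  have hfr : fr x ∈ Ω := fr_mem_Omega M Ω hΩ x ⟨Pi.single j 1, hAx⟩
  obtain ⟨n, hn⟩ := hall _ hfr
  have hAy : A.mulVec y = zr k := by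
    rw [hyd, Matrix.mulVec_mulVec, Matrix.mul_nonsing_inv _ (det_Mr M hdet),
      Matrix.one_mulVec]
  have hdx : dotz k x = y j := by
    rw [dotz_dot, ← hAy, dotProduct_comm, Matrix.dotProduct_mulVec,
      ← Matrix.mulVec_transpose, hAx]
    have : zr (Pi.single j (1 : ℤ)) = Pi.single j (1 : ℝ) := by
      funext i
      simp [zr, Pi.single_apply]
    rw [this, single_dotProduct, one_mul]
  have hfrx : dotz k (fr x) = dotz k x - dotz k (zr (flo x)) := by
    rw [fr_eq, dotz_sub]
  refine ⟨n + ∑ i, k i * flo x i, ?_⟩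
  rw [← hdx]
  rw [hfrx, dotz_int] at hn
  push_cast
  push_cast at hn
  linarith

lemma char_sum_one (l : Fin d → ℤ) (ω : Fin d → ℝ) (hω : ω ∈ Ω) :
    ee (2 * Real.pi * dotz (M.mulVec l) ω) = 1 := by
  obtain ⟨⟨j, hj⟩, -⟩ := (hΩ ω).mp hω
  have : dotz (M.mulVec l) ω = ((∑ t, l t * j t : ℤ) : ℝ) := by
    rw [dotz_mulVec, hj]
    push_cast
    simp [zr]
  rw [this, ee_int]

lemma char_sum_zero (hdet : M.det ≠ 0) (k : Fin d → ℤ)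
    (hk : ¬ ∃ l : Fin d → ℤ, k = M.mulVec l) :
    ∑ ω ∈ Ω, ee (2 * Real.pi * dotz k ω) = 0 := by
  classical
  have hex : ∃ ω₀ ∈ Ω, ¬ ∃ n : ℤ, dotz k ω₀ = n := by
    by_contra h
    push_neg at h
    exact hk (dot_int_of_all M Ω hΩ hdet k (by
      intro ω hω
      rcases h ω hω with ⟨n, hn⟩
      exact ⟨n, hn⟩))
  obtain ⟨ω₀, hω₀Ω, hω₀⟩ := hex
  set φ : (Fin d → ℝ) → (Fin d → ℝ) := fun ω => fr (ω + ω₀) with hφ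
  have hφmem : ∀ ω ∈ Ω, φ ω ∈ Ω := by
    intro ω hω
    obtain ⟨⟨j, hj⟩, -⟩ := (hΩ ω).mp hω
    obtain ⟨⟨j₀, hj₀⟩, -⟩ := (hΩ ω₀).mp hω₀Ω
    apply fr_mem_Omega M Ω hΩ
    refine ⟨j + j₀, ?_⟩
    rw [Matrix.mulVec_add, hj, hj₀]
    funext i; simp [zr]
  have hφinj : ∀ ω ∈ Ω, ∀ ω' ∈ Ω, φ ω = φ ω' → ω = ω' := by
    intro ω hω ω' hω' h
    obtain ⟨-, hb⟩ := (hΩ ω).mp hω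
    obtain ⟨-, hb'⟩ := (hΩ ω').mp hω'
    funext i
    have hi := congrFun h i
    simp only [hφ, fr] at hi
    rw [Int.fract_eq_fract] at hi
    obtain ⟨z, hz⟩ := hi
    simp only [Pi.add_apply] at hz
    have hzz : ω i - ω' i = (z : ℝ) := by rw [← hz]; ring
    have h1 := (hb i).1; have h2 := (hb i).2
    have h3 := (hb' i).1; have h4 := (hb' i).2
    have hz0 : z = 0 := by
      have e1 : (-1 : ℝ) < z := by rw [← hzz]; linarith
      have e2 : (z : ℝ) < 1 := by rw [← hzz]; linarith
      have e1' : (-1 : ℤ) < z := by exact_mod_cast e1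
      have e2' : z < 1 := by exact_mod_cast e2
      omega
    rw [hz0] at hzz
    push_cast at hzz
    linarith
  have himg : Ω.image φ = Ω := by
    apply Finset.eq_of_subset_of_card_le
    · intro x hx
      obtain ⟨ω, hω, rfl⟩ := Finset.mem_image.mp hx
      exact hφmem ω hω
    · rw [Finset.card_image_of_injOn hφinj]
  have hterm : ∀ ω ∈ Ω, ee (2 * Real.pi * dotz k (φ ω))
      = ee (2 * Real.pi * dotz k ω₀) * ee (2 * Real.pi * dotz k ω) := by
    intro ω hω
    have h1 : dotz k (φ ω) = dotz k ω + dotz k ω₀ - dotz k (zr (flo (ω + ω₀))) := by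
      simp only [hφ]
      rw [fr_eq, dotz_sub, dotz_add]
    rw [h1, dotz_int]
    have h2 : 2 * Real.pi * (dotz k ω + dotz k ω₀ - ((∑ i, k i * flo (ω + ω₀) i : ℤ) : ℝ))
        = 2 * Real.pi * dotz k ω₀ + (2 * Real.pi * dotz k ω
          + 2 * Real.pi * ((-(∑ i, k i * flo (ω + ω₀) i) : ℤ) : ℝ)) := by
      push_cast; ring
    rw [h2, ee_add, ee_add, ee_int, mul_one]
  set S := ∑ ω ∈ Ω, ee (2 * Real.pi * dotz k ω) with hS
  have key : S = ee (2 * Real.pi * dotz k ω₀) * S := by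
    conv_lhs => rw [hS, ← himg, Finset.sum_image hφinj]
    rw [Finset.sum_congr rfl hterm, ← Finset.mul_sum]
  have hne := ee_ne_one hω₀
  have : (ee (2 * Real.pi * dotz k ω₀) - 1) * S = 0 := by
    rw [sub_mul, one_mul, ← key, sub_self]
  rcases mul_eq_zero.mp this with h | h
  · exact absurd (by rwa [sub_eq_zero] at h) hne
  · exact h

end Omega

/-! ### fhat as a finite sum, smoothness -/

lemma fhat_eq_sum {d : ℕ} (a : (Fin d → ℤ) → ℂ) (ha : (Function.support a).Finite)
    (ξ : Fin d → ℝ) :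
    fhat a ξ = ∑ k ∈ ha.toFinset, a k * ee (dotz k ξ) := by
  rw [fhat]
  apply tsum_eq_sum
  intro k hk
  have : a k = 0 := by
    by_contra h
    exact hk ((Set.Finite.mem_toFinset ha).mpr h)
  simp [this]

lemma term_contDiff {d : ℕ} (k : Fin d → ℤ) (c : ℂ) {n : WithTop ℕ∞} :
    ContDiff ℝ n (fun ξ : Fin d → ℝ => c * ee (dotz k ξ)) := by
  apply ContDiff.mul contDiff_const
  have : (fun ξ : Fin d → ℝ => ee (dotz k ξ))
      = Complex.exp ∘ (fun ξ : Fin d → ℝ => -Complex.I * ((dotz k ξ : ℝ) : ℂ)) := rfl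
  rw [this]
  apply Complex.contDiff_exp.comp
  apply ContDiff.mul contDiff_const
  have hdot : ContDiff ℝ n (fun ξ : Fin d → ℝ => dotz k ξ) := by
    have : (fun ξ : Fin d → ℝ => dotz k ξ)
        = fun ξ : Fin d → ℝ => ∑ i, (k i : ℝ) * ξ i := rfl
    rw [this]
    exact ContDiff.sum fun i _ => contDiff_const.mul (contDiff_apply ℝ ℝ i)
  exact Complex.ofRealCLM.contDiff.comp hdot

lemma fhat_contDiff {d : ℕ} (a : (Fin d → ℤ) → ℂ) (ha : (Function.support a).Finite)
    {n : WithTop ℕ∞} : ContDiff ℝ n (fhat a) := by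
  have h : fhat a = fun ξ => ∑ k ∈ ha.toFinset, a k * ee (dotz k ξ) :=
    funext (fhat_eq_sum a ha)
  rw [h]
  exact ContDiff.sum fun k _ => term_contDiff k (a k)

/-! ### Shift lemma for iterated derivatives -/

lemma iteratedFDeriv_shift {d : ℕ} (f : (Fin d → ℝ) → ℂ)
    (hf : ∀ N : ℕ, ContDiff ℝ (N : WithTop ℕ∞) f) (v : Fin d → ℝ) (n : ℕ) (x : Fin d → ℝ) :
    iteratedFDeriv ℝ n (fun y => f (y + v)) x = iteratedFDeriv ℝ n f (x + v) := by
  induction n generalizing x with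
  | zero => ext m; simp [iteratedFDeriv_zero_apply]
  | succ n IH =>
    simp only [iteratedFDeriv_succ_eq_comp_left, Function.comp_apply]
    congr 1
    have hfun : (iteratedFDeriv ℝ n fun y => f (y + v))
        = fun y => iteratedFDeriv ℝ n f (y + v) := funext fun y => IH y
    rw [hfun]
    have hdiff : DifferentiableAt ℝ (iteratedFDeriv ℝ n f) (x + v) := by
      have hlt : (n : WithTop ℕ∞) < ((n + 1 : ℕ) : WithTop ℕ∞) := by
        exact_mod_cast Nat.lt_succ_self n
      exact ((hf (n + 1)).differentiable_iteratedFDeriv hlt) (x + v)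
    have h2 : HasFDerivAt (fun y : Fin d → ℝ => y + v)
        (ContinuousLinearMap.id ℝ (Fin d → ℝ)) x := (hasFDerivAt_id x).add_const v
    have h3 : HasFDerivAt (fun y => iteratedFDeriv ℝ n f (y + v))
        (fderiv ℝ (iteratedFDeriv ℝ n f) (x + v)) x := by
      have h4 := hdiff.hasFDerivAt.comp x h2
      rw [ContinuousLinearMap.comp_id] at h4
      exact h4
    rw [h3.fderiv]

/-- an interpolatory filter with `m` sum rules has `m` linear-phase moments. -/
theorem stmt1 {d : ℕ} (M : Matrix (Fin d) (Fin d) ℤ) (hM : IsDilation M)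
    (a : (Fin d → ℤ) → ℂ) (ha : (Function.support a).Finite)
    (hint : Interp M a) (ha0 : fhat a 0 = 1)
    (Ω : Finset (Fin d → ℝ))
    (hΩ : ∀ x : Fin d → ℝ, x ∈ Ω ↔
      ((∃ k : Fin d → ℤ, (Mr M)ᵀ.mulVec x = zr k) ∧ ∀ i, 0 ≤ x i ∧ x i < 1))
    (m : ℕ)
    (hsr : ∀ ω ∈ Ω, ω ≠ 0 → ∀ n < m,
      iteratedFDeriv ℝ n (fhat a) ((2 * Real.pi) • ω) = 0) :
    ∀ n < m, iteratedFDeriv ℝ n (fun ξ => fhat a ξ - 1) (0 : Fin d → ℝ) = 0 := by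
  classical
  intro n hn
  have hdet : M.det ≠ 0 := hM.1
  have hm1 : 0 < m := lt_of_le_of_lt (Nat.zero_le n) hn
  set S := ha.toFinset with hSdef
  -- value of fhat at the sum-rule points
  have hval : ∀ ω ∈ Ω, ω ≠ 0 → fhat a ((2 * Real.pi) • ω) = 0 := by
    intro ω hω hne
    have h0 := hsr ω hω hne 0 hm1
    have h1 : (iteratedFDeriv ℝ 0 (fhat a) ((2 * Real.pi) • ω)) (fun _ => 0) = 0 := by
      rw [h0]; rfl
    rwa [iteratedFDeriv_zero_apply] at h1
  have hdm : ((dm M : ℂ)) ≠ 0 := by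
    have : dm M ≠ 0 := by
      simp [dm, Int.natAbs_eq_zero]
      exact hdet
    exact_mod_cast this
  have ha00 : a 0 = ((dm M : ℂ))⁻¹ := by
    have := hint 0
    rw [Matrix.mulVec_zero] at this
    simpa using this
  have h0S : (0 : Fin d → ℤ) ∈ S := by
    rw [hSdef, Set.Finite.mem_toFinset, Function.mem_support, ha00]
    exact inv_ne_zero hdm
  -- the key constant sum
  have hF : ∀ ξ : Fin d → ℝ, ∑ ω ∈ Ω, fhat a (ξ + (2 * Real.pi) • ω)
      = ((dm M : ℂ))⁻¹ * (Ω.card : ℂ) := by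
    intro ξ
    have step1 : ∀ ω : Fin d → ℝ, fhat a (ξ + (2 * Real.pi) • ω)
        = ∑ k ∈ S, a k * ee (dotz k ξ) * ee (2 * Real.pi * dotz k ω) := by
      intro ω
      rw [fhat_eq_sum a ha]
      apply Finset.sum_congr rfl
      intro k _
      rw [dotz_add, dotz_smul, ee_add]
      ring
    calc ∑ ω ∈ Ω, fhat a (ξ + (2 * Real.pi) • ω)
        = ∑ ω ∈ Ω, ∑ k ∈ S, a k * ee (dotz k ξ) * ee (2 * Real.pi * dotz k ω) := by
          exact Finset.sum_congr rfl fun ω _ => step1 ω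
      _ = ∑ k ∈ S, a k * ee (dotz k ξ) * ∑ ω ∈ Ω, ee (2 * Real.pi * dotz k ω) := by
          rw [Finset.sum_comm]
          exact Finset.sum_congr rfl fun k _ => (Finset.mul_sum _ _ _).symm
      _ = ((dm M : ℂ))⁻¹ * (Ω.card : ℂ) := by
          rw [Finset.sum_eq_single_of_mem 0 h0S]
          · have hd0 : dotz (0 : Fin d → ℤ) ξ = 0 := by simp [dotz]
            have hee0 : ee 0 = 1 := by simp [ee]
            have hin : ∑ ω ∈ Ω, ee (2 * Real.pi * dotz (0 : Fin d → ℤ) ω) = (Ω.card : ℂ) := by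
              have h1 : ∀ ω ∈ Ω, ee (2 * Real.pi * dotz (0 : Fin d → ℤ) ω) = 1 :=
                fun ω _ => by simp [dotz, ee]
              rw [Finset.sum_congr rfl h1, Finset.sum_const, nsmul_eq_mul, mul_one]
            rw [hd0, hee0, hin, ha00, mul_one]
          · intro k hkS hk0
            by_cases hkl : ∃ l : Fin d → ℤ, k = M.mulVec l
            · obtain ⟨l, rfl⟩ := hkl
              have hl0 : l ≠ 0 := by
                rintro rfl
                exact hk0 (Matrix.mulVec_zero M)
              rw [hint l, if_neg hl0, mul_zero, zero_mul, zero_mul]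
            · rw [char_sum_zero M Ω hΩ hdet k hkl, mul_zero]
  -- evaluate at 0 to get the cardinality identity
  have hcard : ((dm M : ℂ))⁻¹ * (Ω.card : ℂ) = 1 := by
    rw [← hF 0]
    rw [Finset.sum_eq_single_of_mem 0 (zero_mem_Omega M Ω hΩ)]
    · have : (0 : Fin d → ℝ) + (2 * Real.pi) • (0 : Fin d → ℝ) = 0 := by simp
      rw [this, ha0]
    · intro ω hω hne
      have : (0 : Fin d → ℝ) + (2 * Real.pi) • ω = (2 * Real.pi) • ω := by simp
      rw [this]
      exact hval ω hω hne
  -- the function identity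
  have hid : (fun ξ => fhat a ξ - 1)
      = fun ξ => -∑ ω ∈ Ω.erase 0, fhat a (ξ + (2 * Real.pi) • ω) := by
    funext ξ
    have h1 := hF ξ
    rw [hcard] at h1
    rw [← Finset.add_sum_erase _ _ (zero_mem_Omega M Ω hΩ)] at h1
    have h2 : ξ + (2 * Real.pi) • (0 : Fin d → ℝ) = ξ := by simp
    rw [h2] at h1
    linear_combination h1
  rw [hid]
  -- smoothness facts
  have hsm : ∀ N : ℕ, ContDiff ℝ (N : WithTop ℕ∞) (fhat a) := fun N => fhat_contDiff a ha
  have hshift : ∀ ω : Fin d → ℝ, ∀ N : ℕ,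
      ContDiff ℝ (N : WithTop ℕ∞) (fun ξ : Fin d → ℝ => fhat a (ξ + (2 * Real.pi) • ω)) := by
    intro ω N
    exact (hsm N).comp (contDiff_id.add contDiff_const)
  have hsplit : iteratedFDeriv ℝ n
      (fun ξ : Fin d → ℝ => ∑ ω ∈ Ω.erase 0, fhat a (ξ + (2 * Real.pi) • ω)) (0 : Fin d → ℝ)
      = ∑ ω ∈ Ω.erase 0, iteratedFDeriv ℝ n
          (fun ξ : Fin d → ℝ => fhat a (ξ + (2 * Real.pi) • ω)) (0 : Fin d → ℝ) := by
    have := iteratedFDeriv_sum (𝕜 := ℝ)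
      (f := fun (ω : Fin d → ℝ) (ξ : Fin d → ℝ) => fhat a (ξ + (2 * Real.pi) • ω))
      (u := Ω.erase 0) (i := n) (fun ω _ => hshift ω n)
    have h := congrFun this 0
    simp only [Finset.sum_apply] at h
    simpa using h
  have hterm0 : ∀ ω ∈ Ω.erase 0, iteratedFDeriv ℝ n
      (fun ξ : Fin d → ℝ => fhat a (ξ + (2 * Real.pi) • ω)) (0 : Fin d → ℝ) = 0 := by
    intro ω hω
    rw [iteratedFDeriv_shift (fhat a) hsm ((2 * Real.pi) • ω) n 0, zero_add]
    exact hsr ω (Finset.mem_of_mem_erase hω) (Finset.ne_of_mem_erase hω) n hn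
  have hneg : (fun ξ : Fin d → ℝ => -∑ ω ∈ Ω.erase 0, fhat a (ξ + (2 * Real.pi) • ω))
      = -(fun ξ : Fin d → ℝ => ∑ ω ∈ Ω.erase 0, fhat a (ξ + (2 * Real.pi) • ω)) := rfl
  rw [hneg, iteratedFDeriv_neg_apply, hsplit, Finset.sum_congr rfl hterm0]
  simp
end
end

section
/- Let $\mathcal{G}$ be a finite group of $d\times d$ integer matrices containing an element $\bar{E}$ such that $I_d - \bar{E}$ is invertible. Let $\mathsf{M}$ be a $d\times d$ integer dilation matrix compatible with $\mathcal{G}$ (i.e., $\mathsf{M}E\mathsf{M}^{-1}\in\mathcal{G}$ for all $E\in\mathcal{G}$), and let $a$ be a finitely supported $\mathsf{M}$-interpolatory filter having symmetry type $(\mathcal{G}, c, \epsilon)$ for some $c\in\mathbb{R}^d$ and $\epsilon\in\{-1,1\}$, i.e., $a(E(k-c)+c)=\epsilon\, a(k)$ for all $k\in\mathbb{Z}^d$, $E\in\mathcal{G}$. If $(I_d-\bar{E})c \in \mathsf{M}\mathbb{Z}^d$, then $\epsilon = 1$ and $c = 0$. -/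
open scoped BigOperators Classical
open Asymptotics Filter Matrix

noncomputable section

/-- if an `M`-interpolatory filter has symmetry type `(𝒢, c, ε)` and
`(I - Ē)c ∈ Mℤ^d` for some `Ē ∈ 𝒢` with `I - Ē` invertible, then `ε = 1` and `c = 0`. -/
theorem stmt8 {d : ℕ} (M : Matrix (Fin d) (Fin d) ℤ) (hM : IsDilation M)
    (G : Finset (Matrix (Fin d) (Fin d) ℤ))
    (hG1 : (1 : Matrix (Fin d) (Fin d) ℤ) ∈ G)
    (hGmul : ∀ E ∈ G, ∀ F ∈ G, E * F ∈ G)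
    (hGinv : ∀ E ∈ G, ∃ F ∈ G, E * F = 1)
    (Ebar : Matrix (Fin d) (Fin d) ℤ) (hEbar : Ebar ∈ G)
    (hEinv : ((1 : Matrix (Fin d) (Fin d) ℤ) - Ebar).det ≠ 0)
    (hcompat : ∀ E ∈ G, ∃ E' ∈ G, M * E = E' * M)
    (a : (Fin d → ℤ) → ℂ) (ha : (Function.support a).Finite) (hint : Interp M a)
    (c : Fin d → ℝ) (ε : ℂ) (hε : ε = 1 ∨ ε = -1)
    (hcint : ∀ E ∈ G, ∃ n : Fin d → ℤ, c - (Mr E).mulVec c = zr n)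
    (hsym : ∀ E ∈ G, ∀ k j : Fin d → ℤ,
      zr j = (Mr E).mulVec (zr k - c) + c → a j = ε * a k)
    (hc : ∃ n : Fin d → ℤ, c - (Mr Ebar).mulVec c = zr (M.mulVec n)) :
    ε = 1 ∧ c = 0 := by
  obtain ⟨n, hn⟩ := hc
  have hdm : (dm M : ℂ) ≠ 0 := by
    exact_mod_cast Nat.cast_ne_zero.mpr (Int.natAbs_ne_zero.mpr hM.1)
  have ha0 : a 0 = ((dm M : ℂ))⁻¹ := by
    have := hint 0
    simpa [Matrix.mulVec_zero] using this
  have hzr0 : zr (0 : Fin d → ℤ) = 0 := by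
    funext i; simp [zr]
  have hkey : a (M.mulVec n) = ε * a 0 := by
    apply hsym Ebar hEbar 0 (M.mulVec n)
    rw [hzr0, ← hn]
    funext i
    simp [Matrix.mulVec_neg, Pi.sub_apply, sub_eq_neg_add]
  rw [hint n, ha0] at hkey
  have hεne : ε ≠ 0 := by rcases hε with h | h <;> simp [h]
  have hn0 : n = 0 := by
    by_contra h
    rw [if_neg h, mul_zero] at hkey
    exact (mul_ne_zero hεne (inv_ne_zero hdm)) hkey.symm
  subst hn0
  rw [if_pos rfl, mul_one] at hkey
  have hε1 : ε = 1 := by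
    field_simp at hkey
    tauto
  refine ⟨hε1, ?_⟩
  have hsub : ((1 : Matrix (Fin d) (Fin d) ℝ) - Mr Ebar).mulVec c = 0 := by
    rw [Matrix.sub_mulVec, Matrix.one_mulVec]
    rw [Matrix.mulVec_zero] at hn
    rw [hn, hzr0]
  have hdet : ((1 : Matrix (Fin d) (Fin d) ℝ) - Mr Ebar).det ≠ 0 := by
    have : ((1 : Matrix (Fin d) (Fin d) ℝ) - Mr Ebar) =
        (((1 : Matrix (Fin d) (Fin d) ℤ) - Ebar).map (Int.castRingHom ℝ)) := by
      ext i j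
      simp [Mr, Matrix.one_apply]
    rw [this, ← RingHom.mapMatrix_apply, ← RingHom.map_det]
    simpa using hEinv
  exact Matrix.eq_zero_of_mulVec_eq_zero hdet hsub
end
end

section
/- Let $\mathcal{G}$ be a finite group of $d\times d$ integer matrices containing an element $\bar{E}$ with $I_d-\bar{E}$ invertible, and let $\mathsf{M}$ be a $d\times d$ integer dilation matrix compatible with $\mathcal{G}$. Suppose the finitely supported filter $a$ is $\mathsf{M}$-interpolatory and has symmetry type $(\mathcal{G},c,\epsilon)$ with $(I_d-\bar{E})c \notin \mathsf{M}\mathbb{Z}^d$. Then $a$ has sum rules of order at most $1$ with respect to $\mathsf{M}$, i.e., $\mathrm{sr}(a,\mathsf{M}) \le 1$. -/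
open scoped BigOperators Classical
open Asymptotics Filter Matrix

noncomputable section

/-- `a` has order-`m` sum rules w.r.t. `M` (with `Ω` the set `Ω_M`):
`â(ξ+2πω) = O(‖ξ‖^m)` as `ξ → 0` for every nonzero `ω ∈ Ω_M`. -/
def SumRules {d : ℕ} (M : Matrix (Fin d) (Fin d) ℤ) (Ω : Finset (Fin d → ℝ))
    (a : (Fin d → ℤ) → ℂ) (m : ℕ) : Prop :=
  ∀ ω ∈ Ω, ω ≠ 0 →
    (fun ξ : Fin d → ℝ => fhat a (ξ + (2 * Real.pi) • ω)) =O[nhds (0 : Fin d → ℝ)]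
      fun ξ => ‖ξ‖ ^ m

/-- `Ω` is the set `Ω_M = [M^{-T}ℤ^d] ∩ [0,1)^d`. -/
def OmegaSpec {d : ℕ} (M : Matrix (Fin d) (Fin d) ℤ) (Ω : Finset (Fin d → ℝ)) : Prop :=
  ∀ x : Fin d → ℝ, x ∈ Ω ↔
    ((∃ k : Fin d → ℤ, (Mr M)ᵀ.mulVec x = zr k) ∧ ∀ i, 0 ≤ x i ∧ x i < 1)


namespace Stmt9Aux

def dotZ {d : ℕ} (k : Fin d → ℤ) (ω : Fin d → ℝ) : ℝ := ∑ i, (k i : ℝ) * ω i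

lemma zr_inj {d : ℕ} {k l : Fin d → ℤ} (h : zr k = zr l) : k = l := by
  funext i
  have := congrFun h i
  simp only [zr] at this
  exact_mod_cast this

lemma zr_add {d : ℕ} (k l : Fin d → ℤ) : zr (k + l) = zr k + zr l := by
  funext i; simp [zr]

lemma zr_mulVec {d : ℕ} (M : Matrix (Fin d) (Fin d) ℤ) (v : Fin d → ℤ) :
    (Mr M).mulVec (zr v) = zr (M.mulVec v) := by
  funext i
  simp [Mr, Matrix.mulVec, dotProduct, zr]

lemma dotZ_zero_left {d : ℕ} (ω : Fin d → ℝ) : dotZ 0 ω = 0 := by simp [dotZ]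

lemma dotZ_zero_right {d : ℕ} (k : Fin d → ℤ) : dotZ k 0 = 0 := by simp [dotZ]

lemma dotZ_neg {d : ℕ} (k : Fin d → ℤ) (ω : Fin d → ℝ) : dotZ (-k) ω = - dotZ k ω := by
  simp [dotZ, Finset.sum_neg_distrib]

lemma dotZ_sub {d : ℕ} (k l : Fin d → ℤ) (ω : Fin d → ℝ) :
    dotZ (k - l) ω = dotZ k ω - dotZ l ω := by
  simp [dotZ, sub_mul, Finset.sum_sub_distrib]

lemma dotZ_zr {d : ℕ} (k n : Fin d → ℤ) : dotZ k (zr n) = ((∑ i, k i * n i : ℤ) : ℝ) := by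
  push_cast [dotZ, zr]; rfl

/-- for ω with M^T ω integral, dot of `M m` with `ω` is an integer -/
lemma dotZ_mulVec_int {d : ℕ} (M : Matrix (Fin d) (Fin d) ℤ) (m : Fin d → ℤ)
    (ω : Fin d → ℝ) (n : Fin d → ℤ) (hn : (Mr M)ᵀ.mulVec ω = zr n) :
    dotZ (M.mulVec m) ω = ((∑ j, m j * n j : ℤ) : ℝ) := by
  have h : ∀ j, ∑ i, (M i j : ℝ) * ω i = (n j : ℝ) := by
    intro j
    have := congrFun hn j
    simpa [Mr, Matrix.mulVec, dotProduct, zr, mul_comm] using this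
  calc dotZ (M.mulVec m) ω = ∑ i, (∑ j, (M i j : ℝ) * (m j : ℝ)) * ω i := by
        simp [dotZ, Matrix.mulVec, dotProduct]
    _ = ∑ i, ∑ j, (m j : ℝ) * ((M i j : ℝ) * ω i) := by
        congr 1; funext i
        rw [Finset.sum_mul]
        congr 1; funext j; ring
    _ = ∑ j, (m j : ℝ) * (∑ i, (M i j : ℝ) * ω i) := by
        rw [Finset.sum_comm]
        congr 1; funext j
        rw [Finset.mul_sum]
    _ = ∑ j, (m j : ℝ) * (n j : ℝ) := by simp [h]
    _ = _ := by push_cast; rfl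


lemma dotZ_def {d : ℕ} (k : Fin d → ℤ) (ω : Fin d → ℝ) : dotZ k ω = ∑ i, (k i : ℝ) * ω i := rfl

/-- the character `e2 r = exp(2πi r)` -/
def e2 (r : ℝ) : ℂ := Complex.exp (2 * Real.pi * Complex.I * r)

lemma e2_int (n : ℤ) : e2 (n : ℝ) = 1 := by
  rw [e2]
  have : (2 * Real.pi * Complex.I * ((n : ℝ) : ℂ)) = (n : ℂ) * (2 * Real.pi * Complex.I) := by
    push_cast; ring
  rw [this, Complex.exp_int_mul_two_pi_mul_I]

lemma e2_add (r s : ℝ) : e2 (r + s) = e2 r * e2 s := by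
  rw [e2, e2, e2, ← Complex.exp_add]
  congr 1; push_cast; ring

lemma e2_eq_of_int (r s : ℝ) (n : ℤ) (h : r = s + n) : e2 r = e2 s := by
  rw [h, e2_add, e2_int, mul_one]

lemma e2_ne_one {r : ℝ} (h : ∀ n : ℤ, r ≠ n) : e2 r ≠ 1 := by
  intro h1
  rw [e2, Complex.exp_eq_one_iff] at h1
  obtain ⟨n, hn⟩ := h1
  apply h n
  have hI : (2 * (Real.pi : ℂ) * Complex.I) ≠ 0 := by
    simp [Real.pi_ne_zero, Complex.I_ne_zero]
  have h2 : (2 * (Real.pi : ℂ) * Complex.I) * ((r : ℂ)) = (2 * (Real.pi : ℂ) * Complex.I) * ((n : ℂ)) := by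
    rw [hn]; push_cast; ring
  have : ((r : ℂ)) = (n : ℂ) := mul_left_cancel₀ hI h2
  exact_mod_cast this

/-- Dot of an integer vector with an integer-valued real vector is integral. -/
lemma dotZ_int_vec {d : ℕ} (k : Fin d → ℤ) (v : Fin d → ℝ) (n : Fin d → ℤ)
    (hv : ∀ i, v i = (n i : ℝ)) : ∃ m : ℤ, dotZ k v = (m : ℝ) := by
  refine ⟨∑ i, k i * n i, ?_⟩
  have : v = zr n := by funext i; exact hv i
  rw [this, dotZ_zr]

/-- Orthogonality: if `k ∉ M ℤ^d` then `∑_{ω∈Ω} e2 (k·ω) = 0`. -/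
lemma ortho {d : ℕ} (M : Matrix (Fin d) (Fin d) ℤ) (hMdet : M.det ≠ 0)
    (Ω : Finset (Fin d → ℝ)) (hΩ : OmegaSpec M Ω)
    (k : Fin d → ℤ) (hk : ∀ m, k ≠ M.mulVec m) :
    ∑ ω ∈ Ω, e2 (dotZ k ω) = 0 := by
  -- real matrix invertible
  have hdetR : (Mr M).det ≠ 0 := by
    have : (Mr M).det = ((M.det : ℤ) : ℝ) := by
      show ((Int.castRingHom ℝ).mapMatrix M).det = _
      rw [← RingHom.map_det]; rfl
    rw [this]; exact_mod_cast hMdet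
  have hunit : IsUnit (Mr M).det := isUnit_iff_ne_zero.mpr hdetR
  set x : Fin d → ℝ := (Mr M)⁻¹.mulVec (zr k) with hx
  have hMx : (Mr M).mulVec x = zr k := by
    rw [hx, Matrix.mulVec_mulVec, Matrix.mul_nonsing_inv _ hunit, Matrix.one_mulVec]
  -- find a coordinate of x that is not an integer
  have hj : ∃ j, ∀ n : ℤ, x j ≠ (n : ℝ) := by
    by_contra hcon
    push_neg at hcon
    choose m hm using hcon
    have : x = zr m := by funext i; exact hm i
    rw [this, zr_mulVec] at hMx
    exact hk m (zr_inj hMx.symm)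
  obtain ⟨j, hj⟩ := hj
  -- raw translation vector: row j of (Mr M)⁻¹
  set w : Fin d → ℝ := fun i => (Mr M)⁻¹ j i with hw
  have hdotw : dotZ k w = x j := by
    rw [dotZ_def, hx]
    simp only [Matrix.mulVec, dotProduct, zr, hw]
    exact Finset.sum_congr rfl (fun i _ => mul_comm _ _)
  -- fractional part of w
  set ω0 : Fin d → ℝ := fun i => Int.fract (w i) with hω0
  have hsubfloor : ∀ (u : Fin d → ℝ), (fun i => Int.fract (u i)) = u - zr (fun i => ⌊u i⌋) := by
    intro u; funext i
    show Int.fract (u i) = u i - ((⌊u i⌋ : ℤ) : ℝ)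
    rw [Int.fract]
  -- M^T w = e_j
  have hMTw : (Mr M)ᵀ.mulVec w = fun i => ((1 : Matrix (Fin d) (Fin d) ℝ)) j i := by
    funext i
    have h4 : ((Mr M)⁻¹ * (Mr M)) j i = (1 : Matrix (Fin d) (Fin d) ℝ) j i := by
      rw [Matrix.nonsing_inv_mul _ hunit]
    rw [← h4, Matrix.mul_apply]
    simp only [Matrix.mulVec, dotProduct, Matrix.transpose_apply, hw]
    exact Finset.sum_congr rfl (fun l _ => mul_comm _ _)
  have hMTint : ∀ (u : Fin d → ℝ) (n : Fin d → ℤ), (Mr M)ᵀ.mulVec u = zr n →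
      ∃ nn : Fin d → ℤ, (Mr M)ᵀ.mulVec (fun i => Int.fract (u i)) = zr nn := by
    intro u n hn
    refine ⟨n - Mᵀ.mulVec (fun i => ⌊u i⌋), ?_⟩
    rw [hsubfloor u, Matrix.mulVec_sub, hn]
    have : (Mr M)ᵀ = Mr Mᵀ := by simp [Mr, Matrix.transpose_map]
    rw [this, zr_mulVec]
    funext i; simp [zr]
  -- ω0 ∈ Ω
  have hω0mem : ω0 ∈ Ω := by
    rw [hΩ]
    constructor
    · have : (Mr M)ᵀ.mulVec w = zr (fun i => if j = i then 1 else 0) := by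
        rw [hMTw]; funext i; simp [zr, Matrix.one_apply]
      exact hMTint w _ this
    · intro i; exact ⟨Int.fract_nonneg _, Int.fract_lt_one _⟩
  -- k·ω0 is not an integer
  have hkω0 : ∀ n : ℤ, dotZ k ω0 ≠ (n : ℝ) := by
    intro n hn
    have h1 : dotZ k ω0 = x j - ((∑ i, k i * ⌊w i⌋ : ℤ) : ℝ) := by
      have hfr : ∀ i, ω0 i = w i - ((⌊w i⌋ : ℤ) : ℝ) := fun i => by
        show Int.fract (w i) = _
        rw [Int.fract]
      rw [dotZ_def]
      push_cast
      rw [← hdotw, dotZ_def, ← Finset.sum_sub_distrib]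
      refine Finset.sum_congr rfl (fun i _ => ?_)
      rw [hfr i]; ring
    rw [h1] at hn
    apply hj (n + ∑ i, k i * ⌊w i⌋)
    push_cast at hn ⊢
    linarith
  have hne1 : e2 (dotZ k ω0) ≠ 1 := e2_ne_one hkω0
  -- translation invariance of the sum
  set T : (Fin d → ℝ) → (Fin d → ℝ) := fun u i => Int.fract (u i + ω0 i) with hT
  set T' : (Fin d → ℝ) → (Fin d → ℝ) := fun u i => Int.fract (u i - ω0 i) with hT'
  have hmemT : ∀ u ∈ Ω, T u ∈ Ω := by
    intro u hu
    rw [hΩ] at hu ⊢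
    obtain ⟨⟨n, hn⟩, hbox⟩ := hu
    obtain ⟨⟨n0, hn0⟩, _⟩ := (hΩ ω0).mp hω0mem
    refine ⟨?_, fun i => ⟨Int.fract_nonneg _, Int.fract_lt_one _⟩⟩
    have : (Mr M)ᵀ.mulVec (fun i => u i + ω0 i) = zr (n + n0) := by
      have : (fun i => u i + ω0 i) = u + ω0 := rfl
      rw [this, Matrix.mulVec_add, hn, hn0, zr_add]
    exact hMTint _ _ this
  have hmemT' : ∀ u ∈ Ω, T' u ∈ Ω := by
    intro u hu
    rw [hΩ] at hu ⊢
    obtain ⟨⟨n, hn⟩, hbox⟩ := hu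
    obtain ⟨⟨n0, hn0⟩, _⟩ := (hΩ ω0).mp hω0mem
    refine ⟨?_, fun i => ⟨Int.fract_nonneg _, Int.fract_lt_one _⟩⟩
    have : (Mr M)ᵀ.mulVec (fun i => u i - ω0 i) = zr (n - n0) := by
      have : (fun i => u i - ω0 i) = u - ω0 := rfl
      rw [this, Matrix.mulVec_sub, hn, hn0]
      funext i; simp [zr]
    exact hMTint _ _ this
  have hfract_self : ∀ u ∈ Ω, ∀ i, Int.fract (u i) = u i := by
    intro u hu i
    obtain ⟨_, hbox⟩ := (hΩ u).mp hu
    exact Int.fract_eq_self.mpr (hbox i)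
  have hTT' : ∀ u ∈ Ω, T' (T u) = u := by
    intro u hu
    funext i
    show Int.fract (Int.fract (u i + ω0 i) - ω0 i) = u i
    have h2 : Int.fract (u i + ω0 i) - ω0 i = u i - ((⌊u i + ω0 i⌋ : ℤ) : ℝ) := by
      rw [Int.fract]; ring
    rw [h2, Int.fract_sub_intCast, hfract_self u hu i]
  have hT'T : ∀ u ∈ Ω, T (T' u) = u := by
    intro u hu
    funext i
    show Int.fract (Int.fract (u i - ω0 i) + ω0 i) = u i
    have h2 : Int.fract (u i - ω0 i) + ω0 i = u i - ((⌊u i - ω0 i⌋ : ℤ) : ℝ) := by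
      rw [Int.fract]; ring
    rw [h2, Int.fract_sub_intCast, hfract_self u hu i]
  have hsum : ∑ ω ∈ Ω, e2 (dotZ k ω) = ∑ ω ∈ Ω, e2 (dotZ k (T ω)) := by
    refine Finset.sum_bij' (fun ω _ => T' ω) (fun ω _ => T ω) hmemT' hmemT
      (fun u hu => hT'T u hu) (fun u hu => hTT' u hu) (fun u hu => ?_)
    rw [hT'T u hu]
  have hstep : ∀ u ∈ Ω, e2 (dotZ k (T u)) = e2 (dotZ k ω0) * e2 (dotZ k u) := by
    intro u hu
    rw [← e2_add]
    refine e2_eq_of_int _ _ (- ∑ i, k i * ⌊u i + ω0 i⌋) ?_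
    have hfr : ∀ i, T u i = (u i + ω0 i) - ((⌊u i + ω0 i⌋ : ℤ) : ℝ) := fun i => by
      show Int.fract (u i + ω0 i) = _
      rw [Int.fract]
    have h3 : ∑ i, (k i : ℝ) * T u i
        = ∑ i, ((k i : ℝ) * ω0 i + (k i : ℝ) * u i - (k i : ℝ) * ((⌊u i + ω0 i⌋ : ℤ) : ℝ)) := by
      refine Finset.sum_congr rfl (fun i _ => ?_)
      rw [hfr i]; ring
    rw [dotZ_def, dotZ_def, dotZ_def, h3]
    push_cast
    rw [Finset.sum_sub_distrib, Finset.sum_add_distrib]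
    ring
  have hfinal : e2 (dotZ k ω0) * (∑ ω ∈ Ω, e2 (dotZ k ω)) = ∑ ω ∈ Ω, e2 (dotZ k ω) := by
    rw [Finset.mul_sum, hsum]
    exact Finset.sum_congr rfl (fun u hu => (hstep u hu).symm)
  have h5 : (e2 (dotZ k ω0) - 1) * (∑ ω ∈ Ω, e2 (dotZ k ω)) = 0 := by
    rw [sub_mul, one_mul, hfinal, sub_self]
  rcases mul_eq_zero.mp h5 with h6 | h6
  · exact absurd (sub_eq_zero.mp h6) hne1
  · exact h6

/-- cancel M on the left for integer matrices -/
lemma mul_left_cancel_int {d : ℕ} (M : Matrix (Fin d) (Fin d) ℤ) (hMdet : M.det ≠ 0)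
    {A B : Matrix (Fin d) (Fin d) ℤ} (h : M * A = M * B) : A = B := by
  have h2 : M.adjugate * (M * A) = M.adjugate * (M * B) := by rw [h]
  rw [← Matrix.mul_assoc, ← Matrix.mul_assoc, Matrix.adjugate_mul, Matrix.smul_mul,
    Matrix.one_mul, Matrix.smul_mul, Matrix.one_mul] at h2
  ext i j
  have := congrFun (congrFun h2 i) j
  simp only [Matrix.smul_apply, smul_eq_mul] at this
  exact mul_left_cancel₀ hMdet this

/-- the conjugation map is onto `G`: some `E ∈ G` has `M * E = Ebar * M`. -/
lemma exists_conj {d : ℕ} (M : Matrix (Fin d) (Fin d) ℤ) (hMdet : M.det ≠ 0)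
    (G : Finset (Matrix (Fin d) (Fin d) ℤ))
    (hcompat : ∀ E ∈ G, ∃ E' ∈ G, M * E = E' * M)
    (Ebar : Matrix (Fin d) (Fin d) ℤ) (hEbar : Ebar ∈ G) :
    ∃ E ∈ G, M * E = Ebar * M := by
  classical
  have hch : ∀ E : {x // x ∈ G}, ∃ E' : {x // x ∈ G}, M * E.1 = E'.1 * M := by
    intro E
    obtain ⟨E', hE', h⟩ := hcompat E.1 E.2
    exact ⟨⟨E', hE'⟩, h⟩
  choose f hf using hch
  have hinj : Function.Injective f := by
    intro E1 E2 h
    have h1 := hf E1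
    have h2 := hf E2
    rw [h] at h1
    have : M * E1.1 = M * E2.1 := by rw [h1, ← h2]
    exact Subtype.ext (mul_left_cancel_int M hMdet this)
  obtain ⟨E, hE⟩ := Finite.injective_iff_surjective.mp hinj ⟨Ebar, hEbar⟩
  refine ⟨E.1, E.2, ?_⟩
  rw [hf E, hE]

/-- elements of G are invertible with inverse in G, in two-sided form -/
lemma inv_in_G {d : ℕ} (G : Finset (Matrix (Fin d) (Fin d) ℤ))
    (hGinv : ∀ E ∈ G, ∃ F ∈ G, E * F = 1)
    {E : Matrix (Fin d) (Fin d) ℤ} (hE : E ∈ G) :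
    ∃ F, E * F = 1 ∧ F * E = 1 := by
  obtain ⟨F, _, h⟩ := hGinv E hE
  exact ⟨F, h, mul_eq_one_comm.mp h⟩

lemma coset_val {d : ℕ} (M : Matrix (Fin d) (Fin d) ℤ) (hMdet : M.det ≠ 0)
    (G : Finset (Matrix (Fin d) (Fin d) ℤ))
    (hGinv : ∀ E ∈ G, ∃ F ∈ G, E * F = 1)
    (Ebar : Matrix (Fin d) (Fin d) ℤ) (hEbar : Ebar ∈ G)
    (hcompat : ∀ E ∈ G, ∃ E' ∈ G, M * E = E' * M)
    (a : (Fin d → ℤ) → ℂ) (hint : Interp M a)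
    (c : Fin d → ℝ) (ε : ℂ)
    (hsym : ∀ E ∈ G, ∀ k j : Fin d → ℤ,
      zr j = (Mr E).mulVec (zr k - c) + c → a j = ε * a k)
    (k0 : Fin d → ℤ) (hk0 : c - (Mr Ebar).mulVec c = zr k0) :
    ∀ m, a (k0 + M.mulVec m) = ε * (((dm M : ℂ))⁻¹ * (if m = 0 then 1 else 0)) := by
  obtain ⟨E, hEG, hME⟩ := exists_conj M hMdet G hcompat Ebar hEbar
  obtain ⟨F, hEF, hFE⟩ := inv_in_G G hGinv hEG
  intro m
  set n : Fin d → ℤ := F.mulVec m with hn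
  have hEn : E.mulVec n = m := by
    rw [hn, Matrix.mulVec_mulVec, hEF, Matrix.one_mulVec]
  have hEbarMn : Ebar.mulVec (M.mulVec n) = M.mulVec m := by
    rw [Matrix.mulVec_mulVec, ← hME, ← Matrix.mulVec_mulVec, hEn]
  have hj : zr (k0 + M.mulVec m) = (Mr Ebar).mulVec (zr (M.mulVec n) - c) + c := by
    rw [Matrix.mulVec_sub, zr_mulVec, hEbarMn]
    rw [zr_add, ← hk0]
    abel
  have hsy := hsym Ebar hEbar (M.mulVec n) (k0 + M.mulVec m) hj
  rw [hsy, hint n]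
  have : (n = 0) ↔ (m = 0) := by
    constructor
    · intro h; rw [← hEn, h, Matrix.mulVec_zero]
    · intro h; rw [hn, h, Matrix.mulVec_zero]
  simp only [this]

lemma fhat_fin {d : ℕ} (a : (Fin d → ℤ) → ℂ) (ha : (Function.support a).Finite)
    (ξ : Fin d → ℝ) :
    fhat a ξ = ∑ k ∈ ha.toFinset, a k * Complex.exp (-Complex.I * ((∑ i, (k i : ℝ) * ξ i : ℝ) : ℂ)) := by
  refine tsum_eq_sum (fun k hk => ?_)
  have : a k = 0 := by
    by_contra h
    exact hk (ha.mem_toFinset.mpr h)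
  rw [this, zero_mul]

lemma exp_slope_lim (z : ℂ) :
    Filter.Tendsto (fun t : ℝ => (Complex.exp (-Complex.I * z * (t : ℂ)) - 1) / (t : ℂ))
      (nhdsWithin 0 {0}ᶜ) (nhds (-Complex.I * z)) := by
  have base : HasDerivAt (fun t : ℝ => ((t : ℝ) : ℂ)) 1 0 := by
    simpa using (hasDerivAt_id (0:ℝ)).ofReal_comp
  have hlin : HasDerivAt (fun t : ℝ => (-Complex.I * z) * ((t : ℝ) : ℂ)) (-Complex.I * z) 0 := by
    simpa using base.const_mul (-Complex.I * z)
  have hexp : HasDerivAt (fun t : ℝ => Complex.exp ((-Complex.I * z) * ((t : ℝ) : ℂ)))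
      (-Complex.I * z) 0 := by
    simpa using hlin.cexp
  have h1 := hasDerivAt_iff_tendsto_slope.mp hexp
  have h2 : (fun t : ℝ => slope (fun t : ℝ => Complex.exp ((-Complex.I * z) * ((t : ℝ) : ℂ))) 0 t)
      = fun t : ℝ => (Complex.exp (-Complex.I * z * (t : ℂ)) - 1) / (t : ℂ) := by
    funext t
    rw [slope_def_module]
    simp only [sub_zero, Complex.ofReal_zero, mul_zero, Complex.exp_zero]
    rw [Complex.real_smul, Complex.ofReal_inv]
    rw [div_eq_inv_mul]
  exact Filter.Tendsto.congr (fun t => congrFun h2 t) h1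

lemma deriv_vanish {d : ℕ} (a : (Fin d → ℤ) → ℂ) (ha : (Function.support a).Finite)
    (ω : Fin d → ℝ) (j : Fin d)
    (h : (fun ξ : Fin d → ℝ => fhat a (ξ + (2 * Real.pi) • ω)) =O[nhds (0 : Fin d → ℝ)]
      fun ξ => ‖ξ‖ ^ 2) :
    ∑ k ∈ ha.toFinset, (a k * e2 (dotZ (-k) ω)) * ((k j : ℤ) : ℂ) = 0 := by
  classical
  set A := ha.toFinset with hA
  set e : Fin d → ℝ := Pi.single j (1:ℝ) with he
  set cc : (Fin d → ℤ) → ℂ := fun k => a k * e2 (dotZ (-k) ω) with hcc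
  set g : ℝ → ℂ := fun t => fhat a (t • e + (2 * Real.pi) • ω) with hg
  -- value of g
  have gval : ∀ t : ℝ, g t = ∑ k ∈ A, cc k * Complex.exp (-Complex.I * ((k j : ℤ) : ℂ) * (t : ℂ)) := by
    intro t
    show fhat a (t • e + (2 * Real.pi) • ω) = _
    rw [fhat_fin a ha]
    refine Finset.sum_congr rfl (fun k hk => ?_)
    have hinner : (∑ i, (k i : ℝ) * (t • e + (2 * Real.pi) • ω) i : ℝ)
        = (k j : ℝ) * t + 2 * Real.pi * dotZ k ω := by
      have h1 : ∀ i, (t • e + (2 * Real.pi) • ω) i = t * e i + 2 * Real.pi * ω i := fun i => rfl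
      simp only [h1]
      rw [show (∑ i, (k i : ℝ) * (t * e i + 2 * Real.pi * ω i))
          = (∑ i, (k i : ℝ) * e i * t) + ∑ i, 2 * Real.pi * ((k i : ℝ) * ω i) from by
        rw [← Finset.sum_add_distrib]; exact Finset.sum_congr rfl (fun i _ => by ring)]
      rw [← Finset.mul_sum]
      have h2 : (∑ i, (k i : ℝ) * e i * t) = (k j : ℝ) * t := by
        simp [he, Pi.single_apply, mul_ite, ite_mul]
      rw [h2, dotZ]
    rw [hinner]
    show a k * Complex.exp (-Complex.I * ((((k j : ℝ) * t + 2 * Real.pi * dotZ k ω) : ℝ) : ℂ))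
        = (a k * e2 (dotZ (-k) ω)) * Complex.exp (-Complex.I * ((k j : ℤ) : ℂ) * (t : ℂ))
    rw [e2, dotZ_neg, mul_assoc (a k), ← Complex.exp_add]
    congr 1
    push_cast
    ring
  -- big-O bound along the line
  obtain ⟨C, hC⟩ := h.bound
  set C' : ℝ := max C 0 with hC'
  have hC'0 : 0 ≤ C' := le_max_right _ _
  have htend : Filter.Tendsto (fun t : ℝ => t • e) (nhds 0) (nhds (0 : Fin d → ℝ)) := by
    have := (continuous_id.smul (continuous_const : Continuous fun _ : ℝ => e)).tendsto (0:ℝ)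
    convert this using 2 <;> simp
  have hCg : ∀ᶠ t : ℝ in nhds 0, ‖g t‖ ≤ C' * (‖e‖^2 * |t|^2) := by
    filter_upwards [htend.eventually hC] with t ht
    have h1 : ‖g t‖ ≤ C * ‖‖t • e‖^2‖ := ht
    have h2 : ‖‖t • e‖^2‖ = ‖e‖^2 * |t|^2 := by
      rw [Real.norm_of_nonneg (by positivity), norm_smul, Real.norm_eq_abs, mul_pow]
      ring
    calc ‖g t‖ ≤ C * ‖‖t • e‖^2‖ := h1
      _ ≤ C' * ‖‖t • e‖^2‖ := by
          apply mul_le_mul_of_nonneg_right (le_max_left _ _) (norm_nonneg _)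
      _ = C' * (‖e‖^2 * |t|^2) := by rw [h2]
  -- g 0 = 0
  have g0 : g 0 = 0 := by
    have h0 := hCg.self_of_nhds
    simp only [abs_zero] at h0
    have : ‖g 0‖ ≤ 0 := by simpa using h0
    exact norm_le_zero_iff.mp this
  have hsum0 : ∑ k ∈ A, cc k = 0 := by
    have := gval 0
    rw [g0] at this
    simp only [Complex.ofReal_zero, mul_zero, Complex.exp_zero, mul_one] at this
    exact this.symm
  -- slope of g tends to 0
  have hslope0 : Filter.Tendsto (fun t : ℝ => g t / (t : ℂ)) (nhdsWithin 0 {0}ᶜ) (nhds 0) := by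
    apply squeeze_zero_norm' (a := fun t : ℝ => C' * ‖e‖^2 * |t|)
    · have hev : ∀ᶠ t : ℝ in nhdsWithin 0 {0}ᶜ, ‖g t‖ ≤ C' * (‖e‖^2 * |t|^2) :=
        nhdsWithin_le_nhds hCg
      filter_upwards [hev, self_mem_nhdsWithin] with t ht ht0
      have ht0' : t ≠ 0 := ht0
      have habs : |t| ≠ 0 := abs_ne_zero.mpr ht0'
      have hnorm : ‖g t / (t : ℂ)‖ = ‖g t‖ / |t| := by
        rw [norm_div, Complex.norm_real, Real.norm_eq_abs]
      rw [hnorm]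
      rw [div_le_iff₀ (abs_pos.mpr ht0')]
      calc ‖g t‖ ≤ C' * (‖e‖^2 * |t|^2) := ht
        _ = C' * ‖e‖^2 * |t| * |t| := by rw [sq]; ring
    · have hcont : Continuous (fun t : ℝ => C' * ‖e‖^2 * |t|) :=
        continuous_const.mul continuous_abs
      have h9 := hcont.tendsto (0:ℝ)
      simp only [abs_zero, mul_zero] at h9
      exact h9.mono_left nhdsWithin_le_nhds
  -- the difference-quotient limit
  have hlim : Filter.Tendsto
      (fun t : ℝ => ∑ k ∈ A, cc k * ((Complex.exp (-Complex.I * ((k j : ℤ) : ℂ) * (t : ℂ)) - 1) / (t : ℂ)))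
      (nhdsWithin 0 {0}ᶜ) (nhds (∑ k ∈ A, cc k * (-Complex.I * ((k j : ℤ) : ℂ)))) := by
    apply tendsto_finset_sum
    intro k hk
    exact (exp_slope_lim ((k j : ℤ) : ℂ)).const_mul (cc k)
  -- the two functions agree off 0
  have heq : ∀ᶠ t : ℝ in nhdsWithin 0 {0}ᶜ,
      (∑ k ∈ A, cc k * ((Complex.exp (-Complex.I * ((k j : ℤ) : ℂ) * (t : ℂ)) - 1) / (t : ℂ)))
        = g t / (t : ℂ) := by
    filter_upwards [self_mem_nhdsWithin] with t ht0
    have ht0' : (t : ℂ) ≠ 0 := Complex.ofReal_ne_zero.mpr ht0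
    calc (∑ k ∈ A, cc k * ((Complex.exp (-Complex.I * ((k j : ℤ) : ℂ) * (t : ℂ)) - 1) / (t : ℂ)))
        = ∑ k ∈ A, (cc k * Complex.exp (-Complex.I * ((k j : ℤ) : ℂ) * (t : ℂ)) / (t : ℂ) - cc k / (t : ℂ)) := by
          refine Finset.sum_congr rfl (fun k hk => ?_)
          field_simp
      _ = (∑ k ∈ A, cc k * Complex.exp (-Complex.I * ((k j : ℤ) : ℂ) * (t : ℂ))) / (t : ℂ)
            - (∑ k ∈ A, cc k) / (t : ℂ) := by
          rw [Finset.sum_sub_distrib, Finset.sum_div, Finset.sum_div]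
      _ = g t / (t : ℂ) := by rw [hsum0, gval t]; simp
  have hlim' : Filter.Tendsto (fun t : ℝ => g t / (t : ℂ)) (nhdsWithin 0 {0}ᶜ)
      (nhds (∑ k ∈ A, cc k * (-Complex.I * ((k j : ℤ) : ℂ)))) :=
    hlim.congr' heq
  have huniq : (∑ k ∈ A, cc k * (-Complex.I * ((k j : ℤ) : ℂ))) = 0 :=
    tendsto_nhds_unique hlim' hslope0
  have hfact : (∑ k ∈ A, cc k * (-Complex.I * ((k j : ℤ) : ℂ)))
      = -Complex.I * ∑ k ∈ A, cc k * ((k j : ℤ) : ℂ) := by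
    rw [Finset.mul_sum]
    exact Finset.sum_congr rfl (fun k hk => by ring)
  rw [hfact] at huniq
  rcases mul_eq_zero.mp huniq with h1 | h1
  · exfalso
    apply Complex.I_ne_zero
    simpa using h1
  · exact h1


end Stmt9Aux

/-- if an `M`-interpolatory filter has symmetry type `(𝒢, c, ε)` and
`(I - Ē)c ∉ Mℤ^d` for some `Ē ∈ 𝒢` with `I - Ē` invertible, then `sr(a, M) ≤ 1`,
i.e. `a` does not have order-`2` sum rules. -/
theorem stmt9 {d : ℕ} (M : Matrix (Fin d) (Fin d) ℤ) (hM : IsDilation M)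
    (Ω : Finset (Fin d → ℝ)) (hΩ : OmegaSpec M Ω)
    (G : Finset (Matrix (Fin d) (Fin d) ℤ))
    (hG1 : (1 : Matrix (Fin d) (Fin d) ℤ) ∈ G)
    (hGmul : ∀ E ∈ G, ∀ F ∈ G, E * F ∈ G)
    (hGinv : ∀ E ∈ G, ∃ F ∈ G, E * F = 1)
    (Ebar : Matrix (Fin d) (Fin d) ℤ) (hEbar : Ebar ∈ G)
    (hEinv : ((1 : Matrix (Fin d) (Fin d) ℤ) - Ebar).det ≠ 0)
    (hcompat : ∀ E ∈ G, ∃ E' ∈ G, M * E = E' * M)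
    (a : (Fin d → ℤ) → ℂ) (ha : (Function.support a).Finite) (hint : Interp M a)
    (c : Fin d → ℝ) (ε : ℂ) (hε : ε = 1 ∨ ε = -1)
    (hcint : ∀ E ∈ G, ∃ n : Fin d → ℤ, c - (Mr E).mulVec c = zr n)
    (hsym : ∀ E ∈ G, ∀ k j : Fin d → ℤ,
      zr j = (Mr E).mulVec (zr k - c) + c → a j = ε * a k)
    (hc : ¬ ∃ n : Fin d → ℤ, c - (Mr Ebar).mulVec c = zr (M.mulVec n)) :
    ¬ SumRules M Ω a 2 := by
  classical
  intro hSR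
  have hMdet : M.det ≠ 0 := hM.1
  obtain ⟨k0, hk0⟩ := hcint Ebar hEbar
  have key1 := Stmt9Aux.coset_val M hMdet G hGinv Ebar hEbar hcompat a hint c ε hsym k0 hk0
  have hdm : ((dm M : ℂ)) ≠ 0 := by
    simp only [ne_eq, Nat.cast_eq_zero, dm, Int.natAbs_eq_zero]
    exact hMdet
  have hdminv : ((dm M : ℂ))⁻¹ ≠ 0 := inv_ne_zero hdm
  have hεne : ε ≠ 0 := by rcases hε with h | h <;> simp [h]
  have hak0 : a k0 = ε * ((dm M : ℂ))⁻¹ := by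
    have := key1 0
    rw [Matrix.mulVec_zero, add_zero] at this
    simpa using this
  have hak0ne : a k0 ≠ 0 := by
    rw [hak0]; exact mul_ne_zero hεne hdminv
  have hk0A : k0 ∈ ha.toFinset := ha.mem_toFinset.mpr hak0ne
  have hk0notM : ∀ m, k0 ≠ M.mulVec m := by
    intro m hm
    exact hc ⟨m, by rw [hk0, hm]⟩
  have h0Ω : (0 : Fin d → ℝ) ∈ Ω := by
    rw [hΩ]
    refine ⟨⟨0, ?_⟩, fun i => ⟨le_refl _, zero_lt_one⟩⟩
    rw [Matrix.mulVec_zero]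
    funext i; simp [zr]
  have hcard : ((Ω.card : ℕ) : ℂ) ≠ 0 := by
    simp only [ne_eq, Nat.cast_eq_zero]
    exact Finset.card_ne_zero_of_mem h0Ω
  set A := ha.toFinset with hA
  have hD : ∀ ω ∈ Ω, ω ≠ 0 → ∀ j,
      ∑ k ∈ A, (a k * Stmt9Aux.e2 (Stmt9Aux.dotZ (-k) ω)) * ((k j : ℤ) : ℂ) = 0 :=
    fun ω hω hne j => Stmt9Aux.deriv_vanish a ha ω j (hSR ω hω hne)
  -- for each coordinate j, show (k0 j : ℂ) = 0
  have hk0j : ∀ j, ((k0 j : ℤ) : ℂ) = 0 := by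
    intro j
    set F : (Fin d → ℝ) → ℂ :=
      fun ω => ∑ k ∈ A, (a k * Stmt9Aux.e2 (Stmt9Aux.dotZ (-k) ω)) * ((k j : ℤ) : ℂ) with hF
    -- step 1 : F 0 = 0
    have hsum1 : ∑ ω ∈ Ω, F ω = F 0 := by
      refine Finset.sum_eq_single_of_mem 0 h0Ω (fun ω hω hne => ?_)
      exact hD ω hω hne j
    have hsum2 : ∑ ω ∈ Ω, F ω = 0 := by
      rw [hF]
      simp only
      rw [Finset.sum_comm]
      refine Finset.sum_eq_zero (fun k hk => ?_)
      by_cases hkM : ∃ m, k = M.mulVec m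
      · obtain ⟨m, hm⟩ := hkM
        by_cases hm0 : m = 0
        · refine Finset.sum_eq_zero (fun ω hω => ?_)
          have : ((k j : ℤ) : ℂ) = 0 := by
            rw [hm, hm0, Matrix.mulVec_zero]; simp
          rw [this, mul_zero]
        · have hak : a k = 0 := by
            rw [hm, hint m, if_neg hm0, mul_zero]
          refine Finset.sum_eq_zero (fun ω hω => ?_)
          rw [hak, zero_mul, zero_mul]
      · have hnk : ∀ m, -k ≠ M.mulVec m := by
          intro m hm
          exact hkM ⟨-m, by rw [← neg_neg k, hm, Matrix.mulVec_neg]⟩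
        have := Stmt9Aux.ortho M hMdet Ω hΩ (-k) hnk
        calc ∑ ω ∈ Ω, (a k * Stmt9Aux.e2 (Stmt9Aux.dotZ (-k) ω)) * ((k j : ℤ) : ℂ)
            = (a k * ((k j : ℤ) : ℂ)) * ∑ ω ∈ Ω, Stmt9Aux.e2 (Stmt9Aux.dotZ (-k) ω) := by
              rw [Finset.mul_sum]
              exact Finset.sum_congr rfl (fun ω _ => by ring)
          _ = 0 := by rw [this, mul_zero]
    have hF0 : F 0 = 0 := by rw [← hsum1, hsum2]
    -- step 2 : the twisted sum
    have hsum3 : ∑ ω ∈ Ω, Stmt9Aux.e2 (Stmt9Aux.dotZ k0 ω) * F ω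
        = Stmt9Aux.e2 (Stmt9Aux.dotZ k0 0) * F 0 := by
      refine Finset.sum_eq_single_of_mem 0 h0Ω (fun ω hω hne => ?_)
      have hFω : F ω = 0 := hD ω hω hne j
      rw [hFω, mul_zero]
    have hsum4 : ∑ ω ∈ Ω, Stmt9Aux.e2 (Stmt9Aux.dotZ k0 ω) * F ω
        = (a k0 * ((k0 j : ℤ) : ℂ)) * (Ω.card : ℂ) := by
      have hswap : ∑ ω ∈ Ω, Stmt9Aux.e2 (Stmt9Aux.dotZ k0 ω) * F ω
          = ∑ k ∈ A, (a k * ((k j : ℤ) : ℂ))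
              * ∑ ω ∈ Ω, Stmt9Aux.e2 (Stmt9Aux.dotZ (k0 - k) ω) := by
        rw [hF]
        simp only
        rw [show (∑ ω ∈ Ω, Stmt9Aux.e2 (Stmt9Aux.dotZ k0 ω)
              * ∑ k ∈ A, (a k * Stmt9Aux.e2 (Stmt9Aux.dotZ (-k) ω)) * ((k j : ℤ) : ℂ))
            = ∑ ω ∈ Ω, ∑ k ∈ A, (a k * ((k j : ℤ) : ℂ))
              * Stmt9Aux.e2 (Stmt9Aux.dotZ (k0 - k) ω) from ?_]
        · rw [Finset.sum_comm]
          exact Finset.sum_congr rfl (fun k _ => by rw [Finset.mul_sum])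
        · refine Finset.sum_congr rfl (fun ω hω => ?_)
          rw [Finset.mul_sum]
          refine Finset.sum_congr rfl (fun k hk => ?_)
          have he2 : Stmt9Aux.e2 (Stmt9Aux.dotZ (k0 - k) ω)
              = Stmt9Aux.e2 (Stmt9Aux.dotZ k0 ω) * Stmt9Aux.e2 (Stmt9Aux.dotZ (-k) ω) := by
            rw [← Stmt9Aux.e2_add, Stmt9Aux.dotZ_sub, Stmt9Aux.dotZ_neg]
            ring_nf
          rw [he2]
          ring
      rw [hswap]
      have hterm : ∀ k ∈ A, k ≠ k0 →
          (a k * ((k j : ℤ) : ℂ)) * ∑ ω ∈ Ω, Stmt9Aux.e2 (Stmt9Aux.dotZ (k0 - k) ω) = 0 := by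
        intro k hk hne
        by_cases hkM : ∃ m, k0 - k = M.mulVec m
        · obtain ⟨m, hm⟩ := hkM
          have hkeq : k = k0 + M.mulVec (-m) := by
            rw [Matrix.mulVec_neg, ← hm]; abel
          have hm0 : (-m : Fin d → ℤ) ≠ 0 := by
            intro h0
            apply hne
            rw [hkeq, h0, Matrix.mulVec_zero, add_zero]
          have hak : a k = 0 := by
            rw [hkeq, key1 (-m), if_neg hm0, mul_zero, mul_zero]
          rw [hak, zero_mul, zero_mul]
        · have hnk : ∀ m, (k0 - k) ≠ M.mulVec m := fun m hm => hkM ⟨m, hm⟩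
          rw [Stmt9Aux.ortho M hMdet Ω hΩ (k0 - k) hnk, mul_zero]
      rw [Finset.sum_eq_single_of_mem k0 hk0A hterm]
      have hzero : ∑ ω ∈ Ω, Stmt9Aux.e2 (Stmt9Aux.dotZ (k0 - k0) ω) = (Ω.card : ℂ) := by
        have h1 : ∀ ω ∈ Ω, Stmt9Aux.e2 (Stmt9Aux.dotZ (k0 - k0) ω) = 1 := by
          intro ω hω
          rw [sub_self, Stmt9Aux.dotZ_zero_left]
          have h2 := Stmt9Aux.e2_int 0
          simpa using h2
        rw [Finset.sum_congr rfl h1, Finset.sum_const, nsmul_eq_mul, mul_one]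
      rw [hzero]
    have hfinal : (a k0 * ((k0 j : ℤ) : ℂ)) * (Ω.card : ℂ) = 0 := by
      rw [← hsum4, hsum3, hF0, mul_zero]
    rcases mul_eq_zero.mp hfinal with h1 | h1
    · rcases mul_eq_zero.mp h1 with h2 | h2
      · exact absurd h2 hak0ne
      · exact h2
    · exact absurd h1 hcard
  have hk0eq : k0 = 0 := by
    funext j
    have := hk0j j
    exact_mod_cast this
  exact hk0notM 0 (by rw [hk0eq, Matrix.mulVec_zero])
end
end

section
/- Let $\mathcal{G}$ be a finite group of $d\times d$ integer matrices, $\mathsf{M}$ a $d\times d$ integer dilation matrix, $a$ a finitely supported filter that is $\mathcal{G}$-symmetric about $0$ (i.e., $a(Ek)=a(k)$ for all $k\in\mathbb{Z}^d$, $E\in\mathcal{G}$), and $\gamma\in\mathbb{Z}^d$. If $\mathcal{G}_\gamma$ is a subgroup of $\mathcal{G}$ such that $\mathsf{M}E\mathsf{M}^{-1}\in\mathcal{G}$ and $(I_d-E)\mathsf{M}^{-1}\gamma\in\mathbb{Z}^d$ for all $E\in\mathcal{G}_\gamma$, then the coset filter $a^{[\gamma,\mathsf{M}]}$ is $\mathcal{G}_\gamma$-symmetric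 about $-\mathsf{M}^{-1}\gamma$, i.e., $a^{[\gamma,\mathsf{M}]}(E(k+\mathsf{M}^{-1}\gamma)-\mathsf{M}^{-1}\gamma) = a^{[\gamma,\mathsf{M}]}(k)$ for all $k\in\mathbb{Z}^d$ and $E\in\mathcal{G}_\gamma$. -/
open scoped BigOperators Classical
open Asymptotics Filter Matrix

noncomputable section

lemma zr_mulVec {d : ℕ} (A : Matrix (Fin d) (Fin d) ℤ) (v : Fin d → ℤ) :
    zr (A.mulVec v) = (Mr A).mulVec (zr v) := by
  funext i
  simp [zr, Mr, Matrix.mulVec, dotProduct]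

lemma zr_add {d : ℕ} (u v : Fin d → ℤ) : zr (u + v) = zr u + zr v := by
  funext i; simp [zr]

lemma zr_inj_s11 {d : ℕ} {u v : Fin d → ℤ} (h : zr u = zr v) : u = v := by
  funext i
  have := congrFun h i
  simp only [zr] at this
  exact_mod_cast this

/-- if `a` is `𝒢`-symmetric about `0`, and `𝒢_γ ≤ 𝒢` satisfies
`MEM⁻¹ ∈ 𝒢` and `(I-E)M⁻¹γ ∈ ℤ^d` for all `E ∈ 𝒢_γ`, then the coset filter
`a^{[γ,M]}` is `𝒢_γ`-symmetric about `-M⁻¹γ`. -/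
theorem stmt11 {d : ℕ} (M : Matrix (Fin d) (Fin d) ℤ) (hM : IsDilation M)
    (G Gγ : Finset (Matrix (Fin d) (Fin d) ℤ))
    (hG1 : (1 : Matrix (Fin d) (Fin d) ℤ) ∈ G)
    (hGmul : ∀ E ∈ G, ∀ F ∈ G, E * F ∈ G)
    (hGinv : ∀ E ∈ G, ∃ F ∈ G, E * F = 1)
    (hsub : Gγ ⊆ G) (hGγ1 : (1 : Matrix (Fin d) (Fin d) ℤ) ∈ Gγ)
    (hGγmul : ∀ E ∈ Gγ, ∀ F ∈ Gγ, E * F ∈ Gγ)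
    (a : (Fin d → ℤ) → ℂ) (ha : (Function.support a).Finite)
    (hsym : ∀ E ∈ G, ∀ k : Fin d → ℤ, a (E.mulVec k) = a k)
    (γ : Fin d → ℤ)
    (hcompat : ∀ E ∈ Gγ, ∃ E' ∈ G, M * E = E' * M)
    (hγint : ∀ E ∈ Gγ, ∃ n : Fin d → ℤ,
      (Mr M)⁻¹.mulVec (zr γ) - (Mr E).mulVec ((Mr M)⁻¹.mulVec (zr γ)) = zr n) :
    ∀ E ∈ Gγ, ∀ k j : Fin d → ℤ,
      zr j = (Mr E).mulVec (zr k + (Mr M)⁻¹.mulVec (zr γ)) - (Mr M)⁻¹.mulVec (zr γ) →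
        coset M γ a j = coset M γ a k := by
  intro E hE k j hj
  obtain ⟨E', hE', hME⟩ := hcompat E hE
  have hdet : IsUnit (Mr M).det := by
    have : (Mr M).det = (M.det : ℝ) :=
      (RingHom.map_det (Int.castRingHom ℝ) M).symm
    rw [this]
    simpa [isUnit_iff_ne_zero] using hM.1
  have hMinv : ∀ x : Fin d → ℝ, (Mr M).mulVec ((Mr M)⁻¹.mulVec x) = x := by
    intro x
    rw [Matrix.mulVec_mulVec, Matrix.mul_nonsing_inv _ hdet, Matrix.one_mulVec]
  have hMr : Mr M * Mr E = Mr E' * Mr M := by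
    have h1 : Mr (M * E) = Mr M * Mr E := by
      ext i j; simp [Mr, Matrix.mul_apply]
    have h2 : Mr (E' * M) = Mr E' * Mr M := by
      ext i j; simp [Mr, Matrix.mul_apply]
    rw [← h1, ← h2, hME]
  have key : zr (γ + M.mulVec j) = zr (E'.mulVec (γ + M.mulVec k)) := by
    have := congrArg (fun v => (Mr M).mulVec v) hj
    simp only [Matrix.mulVec_sub, Matrix.mulVec_add, Matrix.mulVec_mulVec, hMinv,
      hMr] at this
    have h3 : Mr M * (Mr E * (Mr M)⁻¹) = Mr E' := by
      rw [← mul_assoc, hMr, mul_assoc, Matrix.mul_nonsing_inv _ hdet, mul_one]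
    rw [zr_add, zr_mulVec, zr_mulVec, zr_add, zr_mulVec, this, h3,
      Matrix.mulVec_add, ← Matrix.mulVec_mulVec]
    abel
  have key2 : γ + M.mulVec j = E'.mulVec (γ + M.mulVec k) := zr_inj_s11 key
  simp only [coset, key2, hsym E' hE']
end
end

section
/- Let $\mathsf{M}$ be a $d\times d$ integer dilation matrix and $a$ a finitely supported $\mathsf{M}$-interpolatory filter with $\widehat a(0)=1$. For a nonzero coset representative $\gamma\in\Gamma_{\mathsf{M}}$, define $\widehat{h}(\xi):= d_{\mathsf{M}}^{-1} - d_{\mathsf{M}}|\widehat{a^{[\gamma,\mathsf{M}]}}(\xi)|^2$. If $a$ has sum rules of order $2m$ with respect to $\mathsf{M}$, then $\widehat{h}(\xi) = O(\|\xi\|^{2m})$ as $\xi\to 0$, and $\widehat{h}(\xi)$ is real-valued for all $\xi\in\mathbb{R}^d$. -/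
open scoped BigOperators Classical
open Asymptotics Filter Matrix

noncomputable section

namespace S15
variable {d : ℕ}

def ep (t : ℝ) : ℂ := Complex.exp (2 * Real.pi * Complex.I * t)
lemma ep_zero : ep 0 = 1 := by simp [ep]
lemma ep_add (s t : ℝ) : ep (s + t) = ep s * ep t := by
  rw [ep, ep, ep, ← Complex.exp_add]; push_cast; ring_nf
lemma ep_int (z : ℤ) : ep z = 1 := by
  rw [ep]
  have := Complex.exp_int_mul_two_pi_mul_I z
  rw [← this]; congr 1; push_cast; ring
lemma ep_int' (t : ℝ) (h : ∃ z : ℤ, t = z) : ep t = 1 := by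
  obtain ⟨z, rfl⟩ := h; exact ep_int z
lemma ep_ne_one (t : ℝ) (h : ¬ ∃ z : ℤ, t = z) : ep t ≠ 1 := by
  rw [ep, Ne, Complex.exp_eq_one_iff]
  rintro ⟨n, hn⟩
  refine h ⟨n, ?_⟩
  have hI : (2 * (Real.pi:ℂ) * Complex.I) ≠ 0 := by
    apply mul_ne_zero (mul_ne_zero two_ne_zero ?_) Complex.I_ne_zero
    exact_mod_cast Real.pi_ne_zero
  have ht : (t : ℂ) = (n : ℂ) := by
    apply mul_left_cancel₀ hI
    rw [hn]; ring
  exact_mod_cast ht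

lemma zr_mulVec (M : Matrix (Fin d) (Fin d) ℤ) (k : Fin d → ℤ) :
    zr (M.mulVec k) = (Mr M).mulVec (zr k) := by
  funext i
  simp only [zr, Mr, Matrix.mulVec, dotProduct, Matrix.map_apply]
  push_cast
  rfl
lemma mr_transpose (M : Matrix (Fin d) (Fin d) ℤ) : Mr (Mᵀ) = (Mr M)ᵀ := by
  ext i j; simp [Mr]
lemma zr_inj : Function.Injective (zr (d := d)) := by
  intro x y h
  funext i
  have := congrFun h i
  simp only [zr] at this
  exact_mod_cast this
lemma mr_det_ne (M : Matrix (Fin d) (Fin d) ℤ) (hdet : M.det ≠ 0) : (Mr M).det ≠ 0 := by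
  rw [Mr, show M.map (Int.cast : ℤ → ℝ) = (Int.castRingHom ℝ).mapMatrix M from rfl,
    ← RingHom.map_det]
  simpa using hdet
lemma mulVec_real_inj {A : Matrix (Fin d) (Fin d) ℝ} (hdet : A.det ≠ 0) :
    Function.Injective (A.mulVec) := by
  intro x y h
  have h2 := congrArg (A⁻¹.mulVec) h
  rwa [Matrix.mulVec_mulVec, Matrix.mulVec_mulVec,
    Matrix.nonsing_inv_mul A (isUnit_iff_ne_zero.2 hdet), Matrix.one_mulVec,
    Matrix.one_mulVec] at h2
lemma mulVec_int_inj {M : Matrix (Fin d) (Fin d) ℤ} (hdet : M.det ≠ 0) :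
    Function.Injective (M.mulVec) := by
  intro x y h
  apply zr_inj
  apply mulVec_real_inj (mr_det_ne M hdet)
  rw [← zr_mulVec, ← zr_mulVec, h]
lemma dot_mulVec (M : Matrix (Fin d) (Fin d) ℤ) (n : Fin d → ℤ) (x : Fin d → ℝ) :
    ∑ i, ((M.mulVec n) i : ℝ) * x i = ∑ j, (n j : ℝ) * ((Mr M)ᵀ.mulVec x) j := by
  simp only [Matrix.mulVec, dotProduct, Matrix.transpose_apply, Mr, Matrix.map_apply]
  push_cast
  simp only [Finset.sum_mul]
  rw [Finset.sum_comm]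
  simp only [Finset.mul_sum]
  exact Finset.sum_congr rfl fun j _ => Finset.sum_congr rfl fun i _ => by ring

lemma charSum (M : Matrix (Fin d) (Fin d) ℤ) (hdet : M.det ≠ 0)
    (Ω : Finset (Fin d → ℝ)) (hΩ : OmegaSpec M Ω) (k : Fin d → ℤ) :
    ∑ ω ∈ Ω, ep (∑ i, (k i : ℝ) * ω i) =
      if ∃ n : Fin d → ℤ, k = M.mulVec n then (Ω.card : ℂ) else 0 := by
  by_cases hk : ∃ n : Fin d → ℤ, k = M.mulVec n
  · rw [if_pos hk]
    obtain ⟨n, rfl⟩ := hk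
    rw [Finset.card_eq_sum_ones, Nat.cast_sum]
    refine Finset.sum_congr rfl fun ω hω => ?_
    obtain ⟨⟨c, hc⟩, _⟩ := (hΩ ω).1 hω
    rw [dot_mulVec M n ω, hc]
    rw [ep_int' _ ⟨∑ j, n j * c j, by push_cast [zr]; rfl⟩]
    simp
  · rw [if_neg hk]
    set B := ((Mr M)ᵀ)⁻¹ with hB
    have hdetT : ((Mr M)ᵀ).det ≠ 0 := by rw [Matrix.det_transpose]; exact mr_det_ne M hdet
    have hunit : IsUnit ((Mr M)ᵀ).det := isUnit_iff_ne_zero.2 hdetT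
    have hBmul : B * (Mr M)ᵀ = 1 := Matrix.nonsing_inv_mul _ hunit
    have hmulB : (Mr M)ᵀ * B = 1 := Matrix.mul_nonsing_inv _ hunit
    have hex : ∃ j, ¬ ∃ z : ℤ, ∑ i, (k i : ℝ) * B i j = z := by
      by_contra hcon
      push_neg at hcon
      choose p hp using hcon
      refine hk ⟨p, ?_⟩
      apply zr_inj
      rw [zr_mulVec]
      have hvm : Matrix.vecMul (zr k) B = zr p := by
        funext j
        show (Matrix.vecMul (zr k) B) j = ((p j : ℝ))
        rw [← hp j]
        simp [Matrix.vecMul, dotProduct, zr]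
      calc zr k = Matrix.vecMul (zr k) 1 := by rw [Matrix.vecMul_one]
        _ = Matrix.vecMul (zr k) (B * (Mr M)ᵀ) := by rw [hBmul]
        _ = Matrix.vecMul (Matrix.vecMul (zr k) B) (Mr M)ᵀ := by rw [Matrix.vecMul_vecMul]
        _ = Matrix.vecMul (zr p) (Mr M)ᵀ := by rw [hvm]
        _ = (Mr M).mulVec (zr p) := Matrix.vecMul_transpose _ _
    obtain ⟨j, hj⟩ := hex
    set ω₀ : Fin d → ℝ := fun i => B i j with hω₀
    have hω₀T : (Mr M)ᵀ.mulVec ω₀ = zr (fun i => if i = j then 1 else 0) := by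
      funext i
      have h1 : ((Mr M)ᵀ.mulVec ω₀) i = ((Mr M)ᵀ * B) i j := by
        simp [Matrix.mulVec, dotProduct, Matrix.mul_apply, hω₀]
      rw [h1, hmulB]
      simp only [Matrix.one_apply, zr]
      split <;> simp
    set T := fun ω : Fin d → ℝ => fun i => Int.fract (ω i + ω₀ i) with hTdef
    have hT : ∀ ω ∈ Ω, T ω ∈ Ω := by
      intro ω hω
      obtain ⟨⟨c, hc⟩, _⟩ := (hΩ ω).1 hω
      refine (hΩ _).2 ⟨⟨c + (fun i => if i = j then 1 else 0)
        - (Mᵀ).mulVec (fun i => ⌊ω i + ω₀ i⌋), ?_⟩,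
        fun i => ⟨Int.fract_nonneg _, Int.fract_lt_one _⟩⟩
      have hfr : T ω = (ω + ω₀) - zr (fun i => ⌊ω i + ω₀ i⌋) := by
        funext i
        simp only [Pi.sub_apply, Pi.add_apply, zr]
        exact (Int.self_sub_floor (ω i + ω₀ i)).symm
      rw [hfr, Matrix.mulVec_sub, Matrix.mulVec_add, hc, hω₀T]
      rw [show (Mr M)ᵀ.mulVec (zr fun i => ⌊ω i + ω₀ i⌋)
            = zr ((Mᵀ).mulVec fun i => ⌊ω i + ω₀ i⌋) by
        rw [zr_mulVec, mr_transpose]]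
      funext i
      simp only [zr, Pi.sub_apply, Pi.add_apply]
      push_cast
      ring
    have hinj : ∀ ω ∈ Ω, ∀ ω' ∈ Ω, T ω = T ω' → ω = ω' := by
      intro ω hω ω' hω' h
      obtain ⟨_, hb⟩ := (hΩ ω).1 hω
      obtain ⟨_, hb'⟩ := (hΩ ω').1 hω'
      funext i
      have hi := congrFun h i
      simp only [hTdef] at hi
      rw [Int.fract_eq_fract] at hi
      obtain ⟨z, hz⟩ := hi
      have h1 := (hb i).1; have h2 := (hb i).2
      have h1' := (hb' i).1; have h2' := (hb' i).2
      have hz0 : z = 0 := by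
        have l1 : (z:ℝ) < 1 := by linarith
        have l2 : (-1:ℝ) < (z:ℝ) := by linarith
        have m1 : z < 1 := by exact_mod_cast l1
        have m2 : -1 < z := by exact_mod_cast l2
        omega
      rw [hz0] at hz
      simp at hz
      linarith
    have himg : Ω.image T = Ω := by
      apply Finset.eq_of_subset_of_card_le
      · intro x hx
        obtain ⟨ω, hω, rfl⟩ := Finset.mem_image.1 hx
        exact hT ω hω
      · rw [Finset.card_image_of_injOn fun ω hω ω' hω' h => hinj ω hω ω' hω' h]
    have hstep : ∀ ω : Fin d → ℝ, ep (∑ i, (k i : ℝ) * T ω i)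
        = ep (∑ i, (k i:ℝ) * ω₀ i) * ep (∑ i, (k i :ℝ) * ω i) := by
      intro ω
      have hsum : ∑ i, (k i : ℝ) * T ω i
          = ((∑ i, (k i:ℝ) * ω i) + (∑ i, (k i:ℝ) * ω₀ i))
            + (∑ i, (k i:ℝ) * ((-⌊ω i + ω₀ i⌋ : ℤ) : ℝ)) := by
        rw [← Finset.sum_add_distrib, ← Finset.sum_add_distrib]
        refine Finset.sum_congr rfl fun i _ => ?_
        have hti : T ω i = ω i + ω₀ i - (⌊ω i + ω₀ i⌋ : ℝ) := (Int.self_sub_floor (ω i + ω₀ i)).symm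
        rw [hti]
        push_cast
        ring
      rw [hsum, ep_add, ep_add]
      rw [ep_int' (∑ i, (k i:ℝ) * ((-⌊ω i + ω₀ i⌋ : ℤ) : ℝ))
        ⟨∑ i, k i * (-⌊ω i + ω₀ i⌋), by push_cast; ring⟩]
      ring
    have hS : ∑ ω ∈ Ω, ep (∑ i, (k i : ℝ) * ω i)
        = ep (∑ i, (k i:ℝ) * ω₀ i) * ∑ ω ∈ Ω, ep (∑ i, (k i : ℝ) * ω i) := by
      conv_lhs => rw [← himg]
      rw [Finset.sum_image fun ω hω ω' hω' h => hinj ω hω ω' hω' h]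
      rw [Finset.mul_sum]
      exact Finset.sum_congr rfl fun ω _ => hstep ω
    have hne : ep (∑ i, (k i:ℝ) * ω₀ i) ≠ 1 := by
      apply ep_ne_one
      simpa [hω₀] using hj
    have h0 : (1 - ep (∑ i, (k i:ℝ) * ω₀ i)) * ∑ ω ∈ Ω, ep (∑ i, (k i : ℝ) * ω i) = 0 := by
      rw [sub_mul, one_mul, ← hS, sub_self]
    exact (mul_eq_zero.1 h0).resolve_left (sub_ne_zero.2 (Ne.symm hne))

lemma fhat_eq_sum (a : (Fin d → ℤ) → ℂ) (ha : (Function.support a).Finite) (η : Fin d → ℝ) :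
    fhat a η = ∑ n ∈ ha.toFinset,
      a n * Complex.exp (-Complex.I * ((∑ i, (n i : ℝ) * η i : ℝ) : ℂ)) := by
  apply tsum_eq_sum
  intro b hb
  have hb0 : a b = 0 := by
    by_contra h
    exact hb (ha.mem_toFinset.2 h)
  rw [hb0, zero_mul]

lemma mainId (M : Matrix (Fin d) (Fin d) ℤ) (hdet : M.det ≠ 0)
    (Ω : Finset (Fin d → ℝ)) (hΩ : OmegaSpec M Ω)
    (a : (Fin d → ℤ) → ℂ) (ha : (Function.support a).Finite)
    (γ : Fin d → ℤ) (ξ : Fin d → ℝ) :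
    ∑ ω ∈ Ω, ep (∑ i, (γ i : ℝ) * ω i) * fhat a (ξ + (2 * Real.pi) • ω)
      = (Ω.card : ℂ) * Complex.exp (-Complex.I * ((∑ i, (γ i : ℝ) * ξ i : ℝ) : ℂ)) *
          fhat (coset M γ a) ((Mr M)ᵀ.mulVec ξ) := by
  classical
  set E : (Fin d → ℤ) → (Fin d → ℝ) → ℂ :=
    fun n η => Complex.exp (-Complex.I * ((∑ i, (n i : ℝ) * η i : ℝ) : ℂ)) with hE
  have hsplit : ∀ (n : Fin d → ℤ) (ω : Fin d → ℝ),
      ep (∑ i, (γ i : ℝ) * ω i) * E n (ξ + (2 * Real.pi) • ω)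
      = E n ξ * ep (∑ i, ((γ - n) i : ℝ) * ω i) := by
    intro n ω
    simp only [hE, ep, ← Complex.exp_add]
    congr 1
    have r1 : (∑ i, (n i : ℝ) * (ξ + (2 * Real.pi) • ω) i)
        = (∑ i, (n i : ℝ) * ξ i) + 2 * Real.pi * ∑ i, (n i : ℝ) * ω i := by
      rw [Finset.mul_sum, ← Finset.sum_add_distrib]
      refine Finset.sum_congr rfl fun i _ => ?_
      simp only [Pi.add_apply, Pi.smul_apply, smul_eq_mul]
      ring
    have r2 : (∑ i, ((γ - n) i : ℝ) * ω i)
        = (∑ i, (γ i : ℝ) * ω i) - ∑ i, (n i : ℝ) * ω i := by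
      rw [← Finset.sum_sub_distrib]
      refine Finset.sum_congr rfl fun i _ => ?_
      simp only [Pi.sub_apply]
      push_cast
      ring
    rw [r1, r2]
    push_cast
    ring
  have hg : Function.Injective (fun p : Fin d → ℤ => γ + M.mulVec p) := by
    intro x y h
    exact mulVec_int_inj hdet (by simpa using h)
  calc ∑ ω ∈ Ω, ep (∑ i, (γ i : ℝ) * ω i) * fhat a (ξ + (2 * Real.pi) • ω)
      = ∑ ω ∈ Ω, ∑ n ∈ ha.toFinset,
          (a n * E n ξ) * ep (∑ i, ((γ - n) i : ℝ) * ω i) := by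
        refine Finset.sum_congr rfl fun ω _ => ?_
        rw [fhat_eq_sum a ha, Finset.mul_sum]
        refine Finset.sum_congr rfl fun n _ => ?_
        have h1 : ep (∑ i, (γ i : ℝ) * ω i)
            * (a n * E n (ξ + (2 * Real.pi) • ω))
            = a n * (ep (∑ i, (γ i : ℝ) * ω i) * E n (ξ + (2 * Real.pi) • ω)) := by ring
        rw [h1, hsplit n ω]
        ring
    _ = ∑ n ∈ ha.toFinset, (a n * E n ξ) *
          ∑ ω ∈ Ω, ep (∑ i, ((γ - n) i : ℝ) * ω i) := by
        rw [Finset.sum_comm]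
        exact Finset.sum_congr rfl fun n _ => (Finset.mul_sum _ _ _).symm
    _ = ∑ n ∈ ha.toFinset, (a n * E n ξ) *
          (if ∃ p : Fin d → ℤ, n = γ + M.mulVec p then (Ω.card : ℂ) else 0) := by
        refine Finset.sum_congr rfl fun n _ => ?_
        rw [charSum M hdet Ω hΩ (γ - n)]
        congr 1
        have hiff : (∃ p : Fin d → ℤ, γ - n = M.mulVec p)
            ↔ (∃ p : Fin d → ℤ, n = γ + M.mulVec p) := by
          constructor
          · rintro ⟨p, hp⟩
            exact ⟨-p, by rw [Matrix.mulVec_neg, ← hp]; ring⟩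
          · rintro ⟨p, hp⟩
            exact ⟨-p, by rw [Matrix.mulVec_neg, hp]; ring⟩
        exact if_congr hiff rfl rfl
    _ = ∑' n : Fin d → ℤ, (a n * E n ξ) *
          (if ∃ p : Fin d → ℤ, n = γ + M.mulVec p then (Ω.card : ℂ) else 0) := by
        refine (tsum_eq_sum fun b hb => ?_).symm
        have hb0 : a b = 0 := by
          by_contra h
          exact hb (ha.mem_toFinset.2 h)
        rw [hb0]
        ring
    _ = ∑' p : Fin d → ℤ, (a (γ + M.mulVec p) * E (γ + M.mulVec p) ξ) * (Ω.card : ℂ) := by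
        rw [← Function.Injective.tsum_eq hg (f := fun n => (a n * E n ξ) *
          (if ∃ p : Fin d → ℤ, n = γ + M.mulVec p then (Ω.card : ℂ) else 0)) ?_]
        · refine tsum_congr fun p => ?_
          rw [if_pos ⟨p, rfl⟩]
        · intro n hn
          rw [Function.mem_support] at hn
          by_contra hr
          apply hn
          have hni : ¬ ∃ p : Fin d → ℤ, n = γ + M.mulVec p := by
            rintro ⟨p, rfl⟩
            exact hr ⟨p, rfl⟩
          show (a n * E n ξ) *
            (if ∃ p : Fin d → ℤ, n = γ + M.mulVec p then (Ω.card : ℂ) else 0) = 0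
          rw [if_neg hni]
          ring
    _ = ∑' p : Fin d → ℤ, (coset M γ a p * E p ((Mr M)ᵀ.mulVec ξ))
          * ((Ω.card : ℂ) * Complex.exp (-Complex.I * ((∑ i, (γ i : ℝ) * ξ i : ℝ) : ℂ))) := by
        refine tsum_congr fun p => ?_
        have hdot : (∑ i, ((γ + M.mulVec p) i : ℝ) * ξ i)
            = (∑ i, (γ i : ℝ) * ξ i) + ∑ j, (p j : ℝ) * ((Mr M)ᵀ.mulVec ξ) j := by
          rw [← dot_mulVec M p ξ, ← Finset.sum_add_distrib]
          refine Finset.sum_congr rfl fun i _ => ?_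
          simp only [Pi.add_apply]
          push_cast
          ring
        have hEeq : E (γ + M.mulVec p) ξ
            = Complex.exp (-Complex.I * ((∑ i, (γ i : ℝ) * ξ i : ℝ) : ℂ))
              * E p ((Mr M)ᵀ.mulVec ξ) := by
          simp only [hE, ← Complex.exp_add]
          congr 1
          rw [hdot]
          push_cast
          ring
        rw [hEeq, coset]
        ring
    _ = (Ω.card : ℂ) * Complex.exp (-Complex.I * ((∑ i, (γ i : ℝ) * ξ i : ℝ) : ℂ)) *
          fhat (coset M γ a) ((Mr M)ᵀ.mulVec ξ) := by
        rw [tsum_mul_right]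
        rw [show fhat (coset M γ a) ((Mr M)ᵀ.mulVec ξ)
          = ∑' p : Fin d → ℤ, coset M γ a p * E p ((Mr M)ᵀ.mulVec ξ) from rfl]
        ring

lemma fhat_coset_zero (M : Matrix (Fin d) (Fin d) ℤ)
    (a : (Fin d → ℤ) → ℂ) (hint : Interp M a) (η : Fin d → ℝ) :
    fhat (coset M (0 : Fin d → ℤ) a) η = ((dm M : ℂ))⁻¹ := by
  have h : ∀ k, coset M (0 : Fin d → ℤ) a k
      = ((dm M : ℂ))⁻¹ * (if k = 0 then 1 else 0) := by
    intro k
    show a (0 + M.mulVec k) = _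
    rw [zero_add]
    exact hint k
  rw [fhat, tsum_eq_sum (s := {(0 : Fin d → ℤ)}) ?_]
  · rw [Finset.sum_singleton, h 0, if_pos rfl]
    simp
  · intro b hb
    rw [h b, if_neg (by simpa using hb)]
    ring

theorem stmt15' {d : ℕ} (M : Matrix (Fin d) (Fin d) ℤ) (hdet : M.det ≠ 0)
    (Ω : Finset (Fin d → ℝ)) (hΩ : OmegaSpec M Ω)
    (a : (Fin d → ℤ) → ℂ) (ha : (Function.support a).Finite)
    (hint : Interp M a)
    (m : ℕ)
    (hsr : ∀ ω ∈ Ω, ω ≠ 0 →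
      (fun ξ : Fin d → ℝ => fhat a (ξ + (2 * Real.pi) • ω)) =O[nhds (0 : Fin d → ℝ)]
        fun ξ => ‖ξ‖ ^ (2 * m))
    (γ : Fin d → ℤ) :
    ((fun ξ : Fin d → ℝ =>
        ((dm M : ℂ))⁻¹ - (dm M : ℂ) *
          ((starRingEnd ℂ) (fhat (coset M γ a) ξ) * fhat (coset M γ a) ξ))
      =O[nhds (0 : Fin d → ℝ)] fun ξ => ‖ξ‖ ^ (2 * m)) := by
  classical
  have hd0 : (dm M : ℂ) ≠ 0 := by
    simp only [Ne, Nat.cast_eq_zero, dm, Int.natAbs_eq_zero]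
    exact hdet
  have h0Ω : (0 : Fin d → ℝ) ∈ Ω := by
    refine (hΩ 0).2 ⟨⟨0, ?_⟩, fun i => by norm_num⟩
    funext i
    simp [zr, Matrix.mulVec_zero]
  have hN0 : ((Ω.card : ℂ)) ≠ 0 := by
    simp only [Ne, Nat.cast_eq_zero]
    exact Finset.card_ne_zero_of_mem h0Ω
  set g : (Fin d → ℝ) → ℝ := fun ξ => ‖ξ‖ ^ (2 * m) with hgdef
  set u : (Fin d → ℝ) → ℂ :=
    fun ξ => Complex.exp (-Complex.I * ((∑ i, (γ i : ℝ) * ξ i : ℝ) : ℂ)) with hu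
  set G : (Fin d → ℝ) → ℂ := fun ξ => fhat (coset M γ a) ((Mr M)ᵀ.mulVec ξ) with hG
  set R : (Fin d → ℝ) → ℂ := fun ξ => ∑ ω ∈ Ω.erase 0,
    ep (∑ i, (γ i : ℝ) * ω i) * fhat a (ξ + (2 * Real.pi) • ω) with hR
  set R0 : (Fin d → ℝ) → ℂ := fun ξ => ∑ ω ∈ Ω.erase 0,
    fhat a (ξ + (2 * Real.pi) • ω) with hR0
  set ρ : (Fin d → ℝ) → ℂ := fun ξ => ((Ω.card : ℂ))⁻¹ * (R ξ - R0 ξ) with hρ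
  have hIγ : ∀ ξ, fhat a ξ + R ξ = (Ω.card : ℂ) * (u ξ * G ξ) := by
    intro ξ
    have h := mainId M hdet Ω hΩ a ha γ ξ
    rw [← Finset.add_sum_erase Ω _ h0Ω] at h
    simp only [Pi.zero_apply, mul_zero, Finset.sum_const_zero, ep_zero, one_mul,
      smul_zero, add_zero] at h
    rw [hR, hu, hG]
    rw [h]
    ring
  have hI0 : ∀ ξ, fhat a ξ + R0 ξ = (Ω.card : ℂ) * ((dm M : ℂ))⁻¹ := by
    intro ξ
    have h := mainId M hdet Ω hΩ a ha 0 ξ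
    rw [← Finset.add_sum_erase Ω _ h0Ω] at h
    simp only [Pi.zero_apply, Int.cast_zero, zero_mul, Finset.sum_const_zero, ep_zero,
      one_mul, smul_zero, add_zero, Complex.ofReal_zero, mul_zero, Complex.exp_zero,
      fhat_coset_zero M a hint] at h
    rw [hR0]
    rw [h]
    ring
  have key : ∀ ξ, u ξ * G ξ = ((dm M : ℂ))⁻¹ + ρ ξ := by
    intro ξ
    apply mul_left_cancel₀ hN0
    calc (Ω.card : ℂ) * (u ξ * G ξ) = fhat a ξ + R ξ := (hIγ ξ).symm
      _ = ((Ω.card : ℂ) * ((dm M : ℂ))⁻¹ - R0 ξ) + R ξ := by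
          rw [← hI0 ξ]; ring
      _ = (Ω.card : ℂ) * (((dm M : ℂ))⁻¹ + ρ ξ) := by
          rw [hρ, mul_add, ← mul_assoc, mul_inv_cancel₀ hN0, one_mul]
          ring
  -- asymptotics of ρ
  have hRO : R =O[nhds (0 : Fin d → ℝ)] g := by
    rw [hR]
    exact IsBigO.fun_sum fun ω hω =>
      (hsr ω (Finset.mem_of_mem_erase hω) (Finset.ne_of_mem_erase hω)).const_mul_left _
  have hR0O : R0 =O[nhds (0 : Fin d → ℝ)] g := by
    rw [hR0]
    exact IsBigO.fun_sum fun ω hω =>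
      hsr ω (Finset.mem_of_mem_erase hω) (Finset.ne_of_mem_erase hω)
  have hρO : ρ =O[nhds (0 : Fin d → ℝ)] g := (hRO.sub hR0O).const_mul_left _
  have hconjO : (fun ξ => (starRingEnd ℂ) (ρ ξ)) =O[nhds (0 : Fin d → ℝ)] g := by
    refine isBigO_norm_left.mp ?_
    simpa only [RCLike.norm_conj] using hρO.norm_left
  have hsq : (fun ξ : Fin d → ℝ => g ξ * g ξ) =O[nhds (0 : Fin d → ℝ)] g := by
    rw [isBigO_iff]
    refine ⟨1, ?_⟩
    have hball : ∀ᶠ ξ : Fin d → ℝ in nhds 0, ‖ξ‖ < 1 := by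
      filter_upwards [Metric.ball_mem_nhds (0 : Fin d → ℝ) one_pos] with ξ hξ
      simpa [dist_zero_right] using hξ
    filter_upwards [hball] with ξ hξ
    have h2 : (0:ℝ) ≤ ‖ξ‖ ^ (2 * m) := pow_nonneg (norm_nonneg _) _
    have h1 : ‖ξ‖ ^ (2 * m) ≤ 1 := pow_le_one₀ (norm_nonneg _) hξ.le
    rw [hgdef]
    simp only [Real.norm_eq_abs, abs_of_nonneg h2, abs_of_nonneg (mul_nonneg h2 h2)]
    calc ‖ξ‖ ^ (2*m) * ‖ξ‖ ^ (2*m) ≤ 1 * ‖ξ‖ ^ (2*m) :=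
          mul_le_mul_of_nonneg_right h1 h2
      _ = 1 * ‖ξ‖ ^ (2*m) := rfl
  have hprodO : (fun ξ => (dm M : ℂ) * ((starRingEnd ℂ) (ρ ξ) * ρ ξ))
      =O[nhds (0 : Fin d → ℝ)] g := ((hconjO.mul hρO).trans hsq).const_mul_left _
  have hfinO : (fun ξ => -(ρ ξ + (starRingEnd ℂ) (ρ ξ)
      + (dm M : ℂ) * ((starRingEnd ℂ) (ρ ξ) * ρ ξ))) =O[nhds (0 : Fin d → ℝ)] g :=
    ((hρO.add hconjO).add hprodO).neg_left
  -- pointwise identity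
  have hpt : ∀ ξ, ((dm M : ℂ))⁻¹ - (dm M : ℂ) * ((starRingEnd ℂ) (G ξ) * G ξ)
      = -(ρ ξ + (starRingEnd ℂ) (ρ ξ)
        + (dm M : ℂ) * ((starRingEnd ℂ) (ρ ξ) * ρ ξ)) := by
    intro ξ
    have huu : (starRingEnd ℂ) (u ξ) * u ξ = 1 := by
      rw [hu]
      rw [← Complex.exp_conj, ← Complex.exp_add]
      rw [show (starRingEnd ℂ) (-Complex.I * ((∑ i, (γ i : ℝ) * ξ i : ℝ) : ℂ))
            + (-Complex.I * ((∑ i, (γ i : ℝ) * ξ i : ℝ) : ℂ)) = 0 by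
        simp only [_root_.map_mul, map_neg, Complex.conj_I, Complex.conj_ofReal]
        ring]
      exact Complex.exp_zero
    have hGG : (starRingEnd ℂ) (G ξ) * G ξ
        = (starRingEnd ℂ) (u ξ * G ξ) * (u ξ * G ξ) := by
      rw [_root_.map_mul]
      calc (starRingEnd ℂ) (G ξ) * G ξ
          = ((starRingEnd ℂ) (u ξ) * u ξ) * ((starRingEnd ℂ) (G ξ) * G ξ) := by
            rw [huu, one_mul]
        _ = ((starRingEnd ℂ) (u ξ) * (starRingEnd ℂ) (G ξ)) * (u ξ * G ξ) := by ring
    rw [hGG, key ξ, map_add, map_inv₀, map_natCast]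
    field_simp
    ring
  have hO : (fun ξ => ((dm M : ℂ))⁻¹ - (dm M : ℂ) *
      ((starRingEnd ℂ) (G ξ) * G ξ)) =O[nhds (0 : Fin d → ℝ)] g :=
    hfinO.congr_left fun ξ => (hpt ξ).symm
  -- transfer through the linear change of variables
  have hdetT : ((Mr M)ᵀ).det ≠ 0 := by
    rw [Matrix.det_transpose]; exact mr_det_ne M hdet
  have hunit : IsUnit ((Mr M)ᵀ).det := isUnit_iff_ne_zero.2 hdetT
  set Bm : Matrix (Fin d) (Fin d) ℝ := ((Mr M)ᵀ)⁻¹ with hBm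
  have hABn : ∀ η, (Mr M)ᵀ.mulVec (Bm.mulVec η) = η := by
    intro η
    rw [Matrix.mulVec_mulVec, Matrix.mul_nonsing_inv _ hunit, Matrix.one_mulVec]
  set clm : (Fin d → ℝ) →L[ℝ] (Fin d → ℝ) :=
    LinearMap.toContinuousLinearMap (Matrix.mulVecLin Bm) with hclm
  have hclm_apply : ∀ η, clm η = Bm.mulVec η := fun η => rfl
  have htend : Tendsto (fun η : Fin d → ℝ => Bm.mulVec η) (nhds 0) (nhds 0) := by
    have := clm.continuous.tendsto 0
    simp only [map_zero] at this
    exact this.congr fun η => hclm_apply η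
  have hcomp := hO.comp_tendsto htend
  have hcomp' : (fun η : Fin d → ℝ => ((dm M : ℂ))⁻¹ - (dm M : ℂ) *
      ((starRingEnd ℂ) (fhat (coset M γ a) η) * fhat (coset M γ a) η))
      =O[nhds (0 : Fin d → ℝ)] fun η => g (Bm.mulVec η) := by
    refine hcomp.congr_left fun η => ?_
    show ((dm M : ℂ))⁻¹ - (dm M : ℂ) *
      ((starRingEnd ℂ) (G (Bm.mulVec η)) * G (Bm.mulVec η)) = _
    rw [hG]
    simp only [hABn η]
  have hRHS : (fun η : Fin d → ℝ => g (Bm.mulVec η)) =O[nhds (0 : Fin d → ℝ)]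
      fun η => ‖η‖ ^ (2 * m) := by
    rw [isBigO_iff]
    refine ⟨‖clm‖ ^ (2 * m), Eventually.of_forall fun η => ?_⟩
    have h1 : ‖Bm.mulVec η‖ ≤ ‖clm‖ * ‖η‖ := by
      rw [← hclm_apply η]
      exact clm.le_opNorm η
    rw [hgdef]
    simp only [Real.norm_eq_abs, abs_of_nonneg (pow_nonneg (norm_nonneg _) (2*m))]
    calc ‖Bm.mulVec η‖ ^ (2*m) ≤ (‖clm‖ * ‖η‖) ^ (2*m) :=
          pow_le_pow_left₀ (norm_nonneg _) h1 _
      _ = ‖clm‖ ^ (2*m) * ‖η‖ ^ (2*m) := mul_pow _ _ _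
  exact hcomp'.trans hRHS

end S15

/-- for an interpolatory filter with `2m` sum rules and a nonzero coset
representative `γ`, `ĥ(ξ) := d⁻¹ - d |â^{[γ,M]}(ξ)|²` is real-valued and
`O(‖ξ‖^{2m})` as `ξ → 0`. -/
theorem stmt15 {d : ℕ} (M : Matrix (Fin d) (Fin d) ℤ) (hM : IsDilation M)
    (Ω : Finset (Fin d → ℝ)) (hΩ : OmegaSpec M Ω)
    (a : (Fin d → ℤ) → ℂ) (ha : (Function.support a).Finite)
    (hint : Interp M a) (ha0 : fhat a 0 = 1)
    (m : ℕ) (hsr : SumRules M Ω a (2 * m))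
    (γ : Fin d → ℤ) (hγ : ¬ ∃ n : Fin d → ℤ, γ = M.mulVec n) :
    ((fun ξ : Fin d → ℝ =>
        ((dm M : ℂ))⁻¹ - (dm M : ℂ) *
          ((starRingEnd ℂ) (fhat (coset M γ a) ξ) * fhat (coset M γ a) ξ))
      =O[nhds (0 : Fin d → ℝ)] fun ξ => ‖ξ‖ ^ (2 * m)) ∧
    (∀ ξ : Fin d → ℝ,
      (((dm M : ℂ))⁻¹ - (dm M : ℂ) *
        ((starRingEnd ℂ) (fhat (coset M γ a) ξ) * fhat (coset M γ a) ξ)).im = 0) := by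
  obtain ⟨hdet, -⟩ := hM
  constructor
  · exact S15.stmt15' M hdet Ω hΩ a ha hint m hsr γ
  · intro ξ
    simp only [Complex.sub_im, Complex.mul_im, Complex.mul_re, Complex.conj_re,
      Complex.conj_im, Complex.inv_im, Complex.natCast_im, Complex.natCast_re]
    ring
end
end

section
/- Let $A$ be a finitely supported filter on $\mathbb{Z}^d$ with $\widehat{A}(\xi) = \overline{\widehat{A}(\xi)}$ for all $\xi\in\mathbb{R}^d$ and $\widehat{A}(\xi)=O(\|\xi\|^{2m})$ as $\xi\to0$ for some $m\in\mathbb{N}_0$. Then there exist finitely supported filters $u_1,\dots,u_t$ and signs $\epsilon_1,\dots,\epsilon_t\in\{-1,1\}$ such that $\widehat{A}(\xi)=\sum_{l=1}^t \epsilon_l |\widehat{u_l}(\xi)|^2$ for all $\xi\in\mathbb{R}^d$, and $\widehat{u_l}(\xi)=O(\|\xi\|^m)$ as $\xi\to0$ for every $l$. -/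
open scoped BigOperators Classical
open Asymptotics Filter Matrix

noncomputable section

namespace S16
variable {d : ℕ}

abbrev V (d : ℕ) := Fin d → ℤ
abbrev RR (d : ℕ) := AddMonoidAlgebra ℂ (V d)

def phase (ξ : Fin d → ℝ) (k : V d) : ℂ :=
  Complex.exp (-Complex.I * ((∑ i, (k i : ℝ) * ξ i : ℝ) : ℂ))

lemma phase_zero (ξ : Fin d → ℝ) : phase ξ (0 : V d) = 1 := by
  simp [phase]

lemma phase_add (ξ : Fin d → ℝ) (k k' : V d) :
    phase ξ (k + k') = phase ξ k * phase ξ k' := by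
  rw [phase, phase, phase, ← Complex.exp_add]
  congr 1
  rw [← mul_add, ← Complex.ofReal_add, ← Finset.sum_add_distrib]
  norm_num
  congr 1
  funext i
  push_cast
  ring

def evChar (ξ : Fin d → ℝ) : Multiplicative (V d) →* ℂ where
  toFun k := phase ξ (Multiplicative.toAdd k)
  map_one' := phase_zero ξ
  map_mul' k k' := phase_add ξ _ _

def Ev (ξ : Fin d → ℝ) : RR d →ₐ[ℂ] ℂ :=
  AddMonoidAlgebra.lift ℂ ℂ (V d) (evChar ξ)

lemma Ev_single (ξ : Fin d → ℝ) (k : V d) (c : ℂ) :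
    Ev ξ (AddMonoidAlgebra.single k c) = c * phase ξ k := by
  rw [Ev, AddMonoidAlgebra.lift_single]
  rfl

lemma Ev_apply (ξ : Fin d → ℝ) (f : RR d) :
    Ev ξ f = ∑ k ∈ f.coeff.support, f.coeff k * phase ξ k := by
  classical
  conv_lhs => rw [← AddMonoidAlgebra.sum_coeff_single f]
  rw [map_finsuppSum]
  rw [Finsupp.sum]
  exact Finset.sum_congr rfl fun k _ => Ev_single ξ k (f.coeff k)

lemma fhat_eq (f : RR d) (ξ : Fin d → ℝ) : fhat (⇑f.coeff) ξ = Ev ξ f := by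
  rw [fhat, Ev_apply, tsum_eq_sum (s := f.coeff.support)]
  · rfl
  · intro k hk
    simp [Finsupp.notMem_support_iff.1 hk]

lemma diff_phase (k : V d) : Differentiable ℝ (fun ξ : Fin d → ℝ => phase ξ k) := by
  unfold phase
  apply Differentiable.cexp
  apply Differentiable.const_mul
  have : Differentiable ℝ (fun ξ : Fin d → ℝ => (∑ i, (k i : ℝ) * ξ i : ℝ)) := by
    apply Differentiable.fun_sum
    intro i _
    exact (differentiable_const _).mul (differentiable_apply i)
  exact Complex.ofRealCLM.differentiable.comp this

lemma diff_Ev (f : RR d) : Differentiable ℝ (fun ξ => Ev ξ f) := by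
  have : (fun ξ => Ev ξ f) = fun ξ => ∑ k ∈ f.coeff.support, f.coeff k * phase ξ k := by
    funext ξ; exact Ev_apply ξ f
  rw [this]
  exact Differentiable.fun_sum fun k _ => (diff_phase k).const_mul _

lemma Ev_isBigO_one (f : RR d) :
    (fun ξ : Fin d → ℝ => Ev ξ f) =O[nhds 0] (fun _ => (1 : ℝ)) :=
  Tendsto.isBigO_one ℝ ((diff_Ev f).continuous.continuousAt.tendsto)



def ej (j : Fin d) : V d := Pi.single j 1

def dl (j : Fin d) : RR d := AddMonoidAlgebra.single (ej j) 1 - 1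

lemma phase_ej (ξ : Fin d → ℝ) (j : Fin d) :
    phase ξ (ej j) = Complex.exp (-Complex.I * (ξ j : ℝ)) := by
  rw [phase]
  congr 2
  rw [show (∑ i, ((ej j i : ℝ) * ξ i)) = ξ j from ?_]
  simp [ej, Pi.single_apply]

-- O(‖ξ‖) bound for exp(-I ξ j) - 1
lemma bigO_exp_sub_one (j : Fin d) :
    (fun ξ : Fin d → ℝ => Complex.exp (-Complex.I * (ξ j : ℝ)) - 1)
      =O[nhds 0] fun ξ => ‖ξ‖ := by
  rw [isBigO_iff]
  refine ⟨2, ?_⟩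
  filter_upwards [Metric.ball_mem_nhds (0 : Fin d → ℝ) one_pos] with ξ hξ
  have hn : ‖ξ‖ < 1 := by simpa using hξ
  have hj : |ξ j| ≤ ‖ξ‖ := by
    simpa using norm_le_pi_norm ξ j
  have habs : ‖-Complex.I * (ξ j : ℝ)‖ ≤ 1 := by
    simp only [norm_mul, norm_neg, Complex.norm_I, one_mul, Complex.norm_real, Real.norm_eq_abs]
    exact hj.trans hn.le
  have := Complex.norm_exp_sub_one_le habs
  calc ‖Complex.exp (-Complex.I * (ξ j : ℝ)) - 1‖
      ≤ 2 * ‖-Complex.I * (ξ j : ℝ)‖ := this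
    _ ≤ 2 * ‖ξ‖ := by
        apply mul_le_mul_of_nonneg_left _ (by norm_num)
        simpa [_root_.map_mul] using hj.trans (le_refl _)
    _ = 2 * ‖‖ξ‖‖ := by rw [Real.norm_of_nonneg (norm_nonneg _)]

lemma bigO_exp_taylor (j : Fin d) :
    (fun ξ : Fin d → ℝ => (Complex.exp (-Complex.I * (ξ j : ℝ)) - 1) - (-Complex.I * (ξ j : ℝ)))
      =O[nhds 0] fun ξ => ‖ξ‖ ^ 2 := by
  rw [isBigO_iff]
  refine ⟨1, ?_⟩
  filter_upwards [Metric.ball_mem_nhds (0 : Fin d → ℝ) one_pos] with ξ hξ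
  have hn : ‖ξ‖ < 1 := by simpa using hξ
  have hj : |ξ j| ≤ ‖ξ‖ := by simpa using norm_le_pi_norm ξ j
  have habs : ‖-Complex.I * (ξ j : ℝ)‖ ≤ 1 := by
    simp only [norm_mul, norm_neg, Complex.norm_I, one_mul, Complex.norm_real, Real.norm_eq_abs]
    exact hj.trans hn.le
  have h2 := Complex.norm_exp_sub_one_sub_id_le habs
  have habs2 : ‖-Complex.I * (ξ j : ℝ)‖ = |ξ j| := by
    simp [_root_.map_mul]
  calc ‖Complex.exp (-Complex.I * (ξ j : ℝ)) - 1 - -Complex.I * (ξ j : ℝ)‖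
      ≤ ‖-Complex.I * (ξ j : ℝ)‖ ^ 2 := by
        simpa [sub_sub] using h2
    _ = |ξ j| ^ 2 := by rw [habs2]
    _ ≤ ‖ξ‖ ^ 2 := by
        apply pow_le_pow_left₀ (abs_nonneg _) hj
    _ ≤ 1 * ‖‖ξ‖ ^ 2‖ := by
        rw [one_mul, Real.norm_of_nonneg (by positivity)]

-- ‖ξ‖^a =O ‖ξ‖^b for b ≤ a
lemma bigO_pow_pow {a b : ℕ} (h : b ≤ a) :
    (fun ξ : Fin d → ℝ => ‖ξ‖ ^ a) =O[nhds 0] fun ξ => ‖ξ‖ ^ b := by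
  rw [isBigO_iff]
  refine ⟨1, ?_⟩
  filter_upwards [Metric.ball_mem_nhds (0 : Fin d → ℝ) one_pos] with ξ hξ
  have hn' : ‖ξ‖ < 1 := by simpa using hξ
  have hn : ‖ξ‖ ≤ 1 := hn'.le
  rw [one_mul, Real.norm_of_nonneg (by positivity), Real.norm_of_nonneg (by positivity)]
  exact pow_le_pow_of_le_one (norm_nonneg _) hn h



-- product of O(‖ξ‖) factors
lemma bigO_prod {ι : Type*} (s : Finset ι) (g : ι → (Fin d → ℝ) → ℂ)
    (h : ∀ t ∈ s, (g t) =O[nhds (0 : Fin d → ℝ)] fun ξ => ‖ξ‖) :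
    (fun ξ => ∏ t ∈ s, g t ξ) =O[nhds (0 : Fin d → ℝ)] fun ξ => ‖ξ‖ ^ s.card := by
  classical
  induction s using Finset.induction with
  | empty => simpa using isBigO_refl (fun _ : Fin d → ℝ => (1:ℂ)) _
  | insert a s' hnotmem ih =>
    have h1 : (g a) =O[nhds (0 : Fin d → ℝ)] fun ξ => ‖ξ‖ := h a (Finset.mem_insert_self a s')
    have h2 := ih fun t ht => h t (Finset.mem_insert_of_mem ht)
    have h3 := h1.mul h2
    rw [Finset.card_insert_of_notMem hnotmem]
    simp only [Finset.prod_insert hnotmem, pow_succ']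
    exact h3

lemma bigO_prod_sub_prod {ι : Type*} (s : Finset ι) (a c : ι → (Fin d → ℝ) → ℂ)
    (ha : ∀ t ∈ s, (a t) =O[nhds (0 : Fin d → ℝ)] fun ξ => ‖ξ‖)
    (hc : ∀ t ∈ s, (c t) =O[nhds (0 : Fin d → ℝ)] fun ξ => ‖ξ‖)
    (hd : ∀ t ∈ s, (fun ξ => a t ξ - c t ξ) =O[nhds (0 : Fin d → ℝ)] fun ξ => ‖ξ‖ ^ 2) :
    (fun ξ => (∏ t ∈ s, a t ξ) - ∏ t ∈ s, c t ξ)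
      =O[nhds (0 : Fin d → ℝ)] fun ξ => ‖ξ‖ ^ (s.card + 1) := by
  classical
  induction s using Finset.induction with
  | empty =>
    simp only [Finset.prod_empty, sub_self, Finset.card_empty]
    exact isBigO_zero _ _
  | insert t s' hnotmem ih =>
    have hmem := Finset.mem_insert_self t s'
    have ha' : ∀ u ∈ s', (a u) =O[nhds (0 : Fin d → ℝ)] fun ξ => ‖ξ‖ :=
      fun u hu => ha u (Finset.mem_insert_of_mem hu)
    have hc' : ∀ u ∈ s', (c u) =O[nhds (0 : Fin d → ℝ)] fun ξ => ‖ξ‖ :=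
      fun u hu => hc u (Finset.mem_insert_of_mem hu)
    have hd' : ∀ u ∈ s', (fun ξ => a u ξ - c u ξ) =O[nhds (0 : Fin d → ℝ)] fun ξ => ‖ξ‖ ^ 2 :=
      fun u hu => hd u (Finset.mem_insert_of_mem hu)
    have key : ∀ ξ : Fin d → ℝ,
        (∏ u ∈ insert t s', a u ξ) - ∏ u ∈ insert t s', c u ξ
        = a t ξ * ((∏ u ∈ s', a u ξ) - ∏ u ∈ s', c u ξ)
          + (a t ξ - c t ξ) * ∏ u ∈ s', c u ξ := by
      intro ξ
      rw [Finset.prod_insert hnotmem, Finset.prod_insert hnotmem]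
      ring
    have hO1 : (fun ξ => a t ξ * ((∏ u ∈ s', a u ξ) - ∏ u ∈ s', c u ξ))
        =O[nhds (0 : Fin d → ℝ)] fun ξ => ‖ξ‖ * ‖ξ‖ ^ (s'.card + 1) :=
      (ha t hmem).mul (ih ha' hc' hd')
    have hO2 : (fun ξ => (a t ξ - c t ξ) * ∏ u ∈ s', c u ξ)
        =O[nhds (0 : Fin d → ℝ)] fun ξ => ‖ξ‖ ^ 2 * ‖ξ‖ ^ s'.card :=
      (hd t hmem).mul (bigO_prod s' c hc')
    have hO1' : (fun ξ => a t ξ * ((∏ u ∈ s', a u ξ) - ∏ u ∈ s', c u ξ))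
        =O[nhds (0 : Fin d → ℝ)] fun ξ => ‖ξ‖ ^ (s'.card + 1 + 1) := by
      refine hO1.trans (isBigO_of_le _ fun ξ => le_of_eq ?_)
      rw [Real.norm_of_nonneg (by positivity), Real.norm_of_nonneg (by positivity)]
      ring
    have hO2' : (fun ξ => (a t ξ - c t ξ) * ∏ u ∈ s', c u ξ)
        =O[nhds (0 : Fin d → ℝ)] fun ξ => ‖ξ‖ ^ (s'.card + 1 + 1) := by
      refine hO2.trans (isBigO_of_le _ fun ξ => le_of_eq ?_)
      rw [Real.norm_of_nonneg (by positivity), Real.norm_of_nonneg (by positivity)]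
      ring
    have hsum := hO1'.add hO2'
    rw [Finset.card_insert_of_notMem hnotmem]
    calc (fun ξ => (∏ u ∈ insert t s', a u ξ) - ∏ u ∈ insert t s', c u ξ)
        = fun ξ => a t ξ * ((∏ u ∈ s', a u ξ) - ∏ u ∈ s', c u ξ)
          + (a t ξ - c t ξ) * ∏ u ∈ s', c u ξ := funext key
      _ =O[nhds (0 : Fin d → ℝ)] _ := hsum

-- scalar: c t^n =O |t|^{n+1} near 0 implies c = 0
lemma scalar_zero (n : ℕ) (c : ℂ)
    (h : (fun t : ℝ => (t : ℂ) ^ n * c) =O[nhds (0:ℝ)] fun t => |t| ^ (n + 1)) :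
    c = 0 := by
  by_contra hc
  have hlo : (fun t : ℝ => |t| ^ (n+1)) =o[nhds (0:ℝ)] fun t => |t| ^ n := by
    rw [isLittleO_iff]
    intro ε hε
    filter_upwards [Metric.ball_mem_nhds (0:ℝ) hε] with t ht
    have : |t| < ε := by simpa [Real.dist_eq] using ht
    rw [Real.norm_of_nonneg (by positivity), Real.norm_of_nonneg (by positivity), pow_succ]
    calc |t| ^ n * |t| ≤ |t| ^ n * ε := by
          apply mul_le_mul_of_nonneg_left this.le (by positivity)
      _ = ε * |t| ^ n := by ring
  have hlo2 := h.trans_isLittleO hlo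
  rw [isLittleO_iff] at hlo2
  have hcpos : (0:ℝ) < ‖c‖ := norm_pos_iff.2 hc
  have hε : (0:ℝ) < ‖c‖ / 2 := by linarith
  have hev := hlo2 hε
  have h2 : ∀ᶠ t : ℝ in nhdsWithin (0:ℝ) {0}ᶜ, ‖(t:ℂ) ^ n * c‖ ≤ ‖c‖ / 2 * ‖(|t| : ℝ) ^ n‖ :=
    hev.filter_mono nhdsWithin_le_nhds
  obtain ⟨t, hle, ht2⟩ := (h2.and eventually_mem_nhdsWithin).exists
  have ht : t ≠ 0 := by simpa using ht2
  have habs : (0:ℝ) < |t| := abs_pos.2 ht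
  have hpos : (0:ℝ) < |t| ^ n := by positivity
  rw [norm_mul, norm_pow, Complex.norm_real, Real.norm_eq_abs,
    Real.norm_of_nonneg (by positivity : (0:ℝ) ≤ |t| ^ n)] at hle
  nlinarith



lemma homog_zero {ι : Type} [Fintype ι] (n : ℕ) (j : ι → Fin n → Fin d) (β : ι → ℂ)
    (h : (fun ξ : Fin d → ℝ => ∑ i, β i * ∏ t, ((ξ (j i t) : ℝ) : ℂ))
      =O[nhds (0 : Fin d → ℝ)] fun ξ => ‖ξ‖ ^ (n + 1)) :
    ∀ ξ : Fin d → ℝ, ∑ i, β i * ∏ t, ((ξ (j i t) : ℝ) : ℂ) = 0 := by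
  intro ξ
  have htend : Tendsto (fun t : ℝ => t • ξ) (nhds 0) (nhds (0 : Fin d → ℝ)) := by
    have := (tendsto_id (x := nhds (0:ℝ))).smul_const ξ
    simpa using this
  have hcomp : (fun t : ℝ => ∑ i, β i * ∏ u, (((t • ξ) (j i u) : ℝ) : ℂ))
      =O[nhds (0:ℝ)] fun t : ℝ => ‖t • ξ‖ ^ (n + 1) := h.comp_tendsto htend
  have hL : (fun t : ℝ => ∑ i, β i * ∏ u, (((t • ξ) (j i u) : ℝ) : ℂ))
      = fun t : ℝ => (t:ℂ)^n * ∑ i, β i * ∏ u, ((ξ (j i u) : ℝ) : ℂ) := by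
    funext t
    rw [Finset.mul_sum]
    refine Finset.sum_congr rfl fun i _ => ?_
    have hp : ∏ u, (((t • ξ) (j i u) : ℝ) : ℂ) = (t:ℂ)^n * ∏ u, ((ξ (j i u) : ℝ) : ℂ) := by
      calc ∏ u, (((t • ξ) (j i u) : ℝ) : ℂ)
          = ∏ u : Fin n, ((t:ℂ) * ((ξ (j i u) : ℝ) : ℂ)) := by
            refine Finset.prod_congr rfl fun u _ => ?_
            rw [Pi.smul_apply, smul_eq_mul]
            push_cast
            ring
        _ = (∏ _u : Fin n, (t:ℂ)) * ∏ u, ((ξ (j i u) : ℝ) : ℂ) := Finset.prod_mul_distrib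
        _ = (t:ℂ)^n * ∏ u, ((ξ (j i u) : ℝ) : ℂ) := by
            rw [Finset.prod_const, Finset.card_univ, Fintype.card_fin]
    rw [hp]
    ring
  rw [hL] at hcomp
  have hR : (fun t : ℝ => ‖t • ξ‖ ^ (n+1)) =O[nhds (0:ℝ)] fun t => |t| ^ (n+1) := by
    apply IsBigO.of_bound (‖ξ‖ ^ (n+1))
    filter_upwards with t
    have h1 : ‖t • ξ‖ = |t| * ‖ξ‖ := by rw [norm_smul, Real.norm_eq_abs]
    rw [Real.norm_of_nonneg (pow_nonneg (norm_nonneg _) _),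
      Real.norm_of_nonneg (pow_nonneg (abs_nonneg _) _), h1, mul_pow]
    exact le_of_eq (mul_comm _ _)
  exact scalar_zero n _ (hcomp.trans hR)

lemma sum_smul_prod_dl_eq_zero {ι : Type} [Fintype ι] (n : ℕ)
    (j : ι → Fin n → Fin d) (β : ι → ℂ)
    (h0 : ∀ ξ : Fin d → ℝ, ∑ i, β i * ∏ t, ((ξ (j i t) : ℝ) : ℂ) = 0) :
    ∑ i, β i • ∏ t, dl (j i t) = (0 : RR d) := by
  classical
  set q : MvPolynomial (Fin d) ℂ :=
    ∑ i, MvPolynomial.C (β i) * ∏ t, MvPolynomial.X (j i t) with hq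
  set qre : MvPolynomial (Fin d) ℝ :=
    ∑ i, MvPolynomial.C ((β i).re) * ∏ t, MvPolynomial.X (j i t) with hqre
  set qim : MvPolynomial (Fin d) ℝ :=
    ∑ i, MvPolynomial.C ((β i).im) * ∏ t, MvPolynomial.X (j i t) with hqim
  have hre : qre = 0 := by
    apply MvPolynomial.funext
    intro x
    have hQre : ∑ i, (β i * ∏ t, ((x (j i t) : ℝ) : ℂ)).re = 0 := by
      have := congrArg Complex.re (h0 x)
      simpa [Complex.re_sum] using this
    rw [hqre, _root_.map_sum, _root_.map_zero, ← hQre]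
    refine Finset.sum_congr rfl fun i _ => ?_
    rw [_root_.map_mul, MvPolynomial.eval_C, _root_.map_prod]
    simp [Complex.mul_re, ← Complex.ofReal_prod]
  have him : qim = 0 := by
    apply MvPolynomial.funext
    intro x
    have hQim : ∑ i, (β i * ∏ t, ((x (j i t) : ℝ) : ℂ)).im = 0 := by
      have := congrArg Complex.im (h0 x)
      simpa [Complex.im_sum] using this
    rw [hqim, _root_.map_sum, _root_.map_zero, ← hQim]
    refine Finset.sum_congr rfl fun i _ => ?_
    rw [_root_.map_mul, MvPolynomial.eval_C, _root_.map_prod]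
    simp [Complex.mul_im, ← Complex.ofReal_prod]
  have hq0 : q = 0 := by
    have hmap : q = (MvPolynomial.map Complex.ofRealHom) qre
        + MvPolynomial.C Complex.I * (MvPolynomial.map Complex.ofRealHom) qim := by
      rw [hq, hqre, hqim, _root_.map_sum, _root_.map_sum, Finset.mul_sum, ← Finset.sum_add_distrib]
      refine Finset.sum_congr rfl fun i _ => ?_
      rw [_root_.map_mul, _root_.map_mul, MvPolynomial.map_C]
      have hX : (MvPolynomial.map Complex.ofRealHom) (∏ t, MvPolynomial.X (j i t))
          = ∏ t, (MvPolynomial.X (j i t) : MvPolynomial (Fin d) ℂ) := by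
        rw [_root_.map_prod]
        exact Finset.prod_congr rfl fun t _ => MvPolynomial.map_X _ _
      rw [hX, MvPolynomial.map_C, Complex.ofRealHom_eq_coe, Complex.ofRealHom_eq_coe]
      have hβ : β i = (((β i).re : ℝ) : ℂ) + Complex.I * (((β i).im : ℝ) : ℂ) := by
        rw [mul_comm]; exact (Complex.re_add_im (β i)).symm
      nth_rewrite 1 [hβ]
      rw [_root_.map_add, _root_.map_mul]
      ring
    rw [hmap, hre, him]; simp
  have h2 : (MvPolynomial.aeval (fun s => dl s)) q = 0 := by
    rw [hq0]; exact _root_.map_zero _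
  rw [hq, _root_.map_sum] at h2
  rw [← h2]
  refine Finset.sum_congr rfl fun i _ => ?_
  rw [_root_.map_mul, MvPolynomial.aeval_C, _root_.map_prod, Algebra.smul_def]
  simp



def Jid (d : ℕ) : Ideal (RR d) := Ideal.span (Set.range (dl (d := d)))

lemma dl_mem (j : Fin d) : dl j ∈ Jid d := Ideal.subset_span ⟨j, rfl⟩

lemma one_sub_one_mem : (AddMonoidAlgebra.single (0 : V d) 1 : RR d) - 1 ∈ Jid d := by
  rw [← AddMonoidAlgebra.one_def, sub_self]
  exact Ideal.zero_mem _

lemma hstep (x y : V d)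
    (hx : (AddMonoidAlgebra.single x 1 : RR d) - 1 ∈ Jid d)
    (hy : (AddMonoidAlgebra.single y 1 : RR d) - 1 ∈ Jid d) :
    (AddMonoidAlgebra.single (x + y) 1 : RR d) - 1 ∈ Jid d := by
  have h : (AddMonoidAlgebra.single (x + y) 1 : RR d) - 1
      = AddMonoidAlgebra.single x 1 * (AddMonoidAlgebra.single y 1 - 1)
        + (AddMonoidAlgebra.single x 1 - 1) := by
    rw [mul_sub, AddMonoidAlgebra.single_mul_single, mul_one, mul_one]
    ring
  rw [h]
  exact Ideal.add_mem _ (Ideal.mul_mem_left _ _ hy) hx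

lemma neg_ej_mem (j : Fin d) :
    (AddMonoidAlgebra.single (-ej j) 1 : RR d) - 1 ∈ Jid d := by
  have h : (AddMonoidAlgebra.single (-ej j) 1 : RR d) - 1
      = -AddMonoidAlgebra.single (-ej j) 1 * dl j := by
    rw [dl, neg_mul, mul_sub, AddMonoidAlgebra.single_mul_single, mul_one, mul_one,
      neg_add_cancel, ← AddMonoidAlgebra.one_def]
    ring
  rw [h]
  exact Ideal.mul_mem_left _ _ (dl_mem j)

lemma pi_single_add (j : Fin d) (a b : ℤ) :
    (Pi.single j (a + b) : V d) = Pi.single j a + Pi.single j b := by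
  funext i
  by_cases h : i = j
  · subst h; simp
  · simp [Pi.single_apply, h]

lemma single_int_mem (j : Fin d) (n : ℤ) :
    (AddMonoidAlgebra.single (Pi.single j n : V d) 1 : RR d) - 1 ∈ Jid d := by
  induction n using Int.induction_on with
  | zero => simpa using one_sub_one_mem
  | succ n ih =>
    rw [pi_single_add]
    exact hstep _ _ ih (by simpa [ej, dl] using dl_mem j)
  | pred n ih =>
    rw [show (-(n:ℤ) - 1 : ℤ) = (-(n:ℤ)) + (-1) by ring, pi_single_add j (-(n:ℤ)) (-1)]
    refine hstep _ _ ih ?_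
    have : (Pi.single j (-1 : ℤ) : V d) = -ej j := by
      funext i; by_cases h : i = j
      · subst h; simp [ej]
      · simp [Pi.single_apply, h, ej]
    rw [this]
    exact neg_ej_mem j

lemma single_sub_one_mem (k : V d) :
    (AddMonoidAlgebra.single k 1 : RR d) - 1 ∈ Jid d := by
  have hk : k = ∑ j, Pi.single j (k j) := (Finset.univ_sum_single k).symm
  rw [hk]
  have : ∀ s : Finset (Fin d),
      (AddMonoidAlgebra.single (∑ j ∈ s, Pi.single j (k j) : V d) 1 : RR d) - 1 ∈ Jid d := by
    intro s
    induction s using Finset.induction with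
    | empty => simpa using one_sub_one_mem
    | insert a s' hnot ih =>
      rw [Finset.sum_insert hnot]
      exact hstep _ _ (single_int_mem a (k a)) ih
  exact this Finset.univ

lemma phase_zero_pt (k : V d) : phase (0 : Fin d → ℝ) k = 1 := by
  simp [phase]

lemma exists_dl_factor (b : RR d) (hb : Ev 0 b = 0) :
    ∃ r : Fin d → RR d, b = ∑ s, dl s * r s := by
  have hsum : ∑ k ∈ b.coeff.support, b.coeff k = 0 := by
    have := hb
    rw [Ev_apply] at this
    simpa [phase_zero_pt] using this
  have hmem : b ∈ Jid d := by
    have hb' : b = ∑ k ∈ b.coeff.support, (b.coeff k) • ((AddMonoidAlgebra.single k 1 : RR d) - 1) := by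
      have h1 : b = ∑ k ∈ b.coeff.support, AddMonoidAlgebra.single k (b.coeff k) := by
        conv_lhs => rw [← AddMonoidAlgebra.sum_coeff_single b]
        rfl
      rw [Finset.sum_congr rfl (fun k _ => smul_sub (b.coeff k) (AddMonoidAlgebra.single k 1) 1)]
      rw [Finset.sum_sub_distrib]
      have h2 : ∀ k : V d, (b.coeff k) • (AddMonoidAlgebra.single k 1 : RR d)
          = AddMonoidAlgebra.single k (b.coeff k) := by
        intro k
        rw [AddMonoidAlgebra.smul_single', mul_one]
      rw [Finset.sum_congr rfl (fun k _ => h2 k), ← h1]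
      have h3 : ∑ k ∈ b.coeff.support, (b.coeff k) • (1 : RR d) = (∑ k ∈ b.coeff.support, b.coeff k) • (1 : RR d) := by
        rw [Finset.sum_smul]
      rw [h3, hsum, zero_smul, sub_zero]
    rw [hb']
    refine Ideal.sum_mem _ fun k _ => ?_
    rw [Algebra.smul_def]
    exact Ideal.mul_mem_left _ _ (single_sub_one_mem k)
  rw [Jid] at hmem
  obtain ⟨c, hc⟩ := (Submodule.mem_span_range_iff_exists_fun (RR d)).1 hmem
  refine ⟨c, ?_⟩
  rw [← hc]
  exact Finset.sum_congr rfl fun s _ => by rw [smul_eq_mul, mul_comm]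



lemma Ev_dl (ξ : Fin d → ℝ) (j : Fin d) :
    Ev ξ (dl j) = Complex.exp (-Complex.I * (ξ j : ℝ)) - 1 := by
  rw [dl, _root_.map_sub, _root_.map_one, Ev_single, one_mul, phase_ej]

lemma dl_bigO (j : Fin d) :
    (fun ξ : Fin d → ℝ => Ev ξ (dl j)) =O[nhds 0] fun ξ => ‖ξ‖ := by
  have : (fun ξ : Fin d → ℝ => Ev ξ (dl j))
      = fun ξ => Complex.exp (-Complex.I * (ξ j : ℝ)) - 1 := funext fun ξ => Ev_dl ξ j
  rw [this]; exact bigO_exp_sub_one j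

lemma dl_taylor (j : Fin d) :
    (fun ξ : Fin d → ℝ => Ev ξ (dl j) - (-Complex.I * ((ξ j : ℝ) : ℂ)))
      =O[nhds 0] fun ξ => ‖ξ‖ ^ 2 := by
  have : (fun ξ : Fin d → ℝ => Ev ξ (dl j) - (-Complex.I * ((ξ j : ℝ) : ℂ)))
      = fun ξ => (Complex.exp (-Complex.I * (ξ j : ℝ)) - 1) - (-Complex.I * ((ξ j : ℝ) : ℂ)) := by
    funext ξ; rw [Ev_dl]
  rw [this]; exact bigO_exp_taylor j

lemma mono_bigO (j : Fin d) :
    (fun ξ : Fin d → ℝ => -Complex.I * ((ξ j : ℝ) : ℂ)) =O[nhds 0] fun ξ => ‖ξ‖ := by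
  apply isBigO_of_le
  intro ξ
  rw [norm_mul, norm_neg, Complex.norm_I, one_mul, Complex.norm_real, Real.norm_eq_abs,
    norm_norm]
  simpa using norm_le_pi_norm ξ j

lemma hid_bigO : (fun ξ : Fin d → ℝ => ξ - 0) =O[nhds (0 : Fin d → ℝ)] fun ξ => ‖ξ‖ := by
  apply isBigO_of_le
  intro ξ
  simp

lemma decomp (n : ℕ) (f : RR d)
    (hf : (fun ξ : Fin d → ℝ => Ev ξ f) =O[nhds (0 : Fin d → ℝ)] fun ξ => ‖ξ‖ ^ n) :
    ∃ (N : ℕ) (j : Fin N → Fin n → Fin d) (b : Fin N → RR d),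
      f = ∑ i, (∏ t, dl (j i t)) * b i := by
  induction n generalizing f with
  | zero =>
    refine ⟨1, fun _ => Fin.elim0, fun _ => f, ?_⟩
    simp
  | succ n IH =>
    have hf' := hf.trans (bigO_pow_pow (Nat.le_succ n))
    obtain ⟨N, j, b, hfe⟩ := IH f hf'
    set β : Fin N → ℂ := fun i => Ev 0 (b i) with hβ
    set b' : Fin N → RR d := fun i => b i - (β i) • 1 with hb'
    set P : Fin N → RR d := fun i => ∏ t, dl (j i t) with hP
    have hEvP : ∀ i (ξ : Fin d → ℝ), Ev ξ (P i) = ∏ t, Ev ξ (dl (j i t)) := by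
      intro i ξ; rw [hP]; exact _root_.map_prod _ _ _
    have hPO : ∀ i, (fun ξ : Fin d → ℝ => Ev ξ (P i)) =O[nhds 0] fun ξ => ‖ξ‖ ^ n := by
      intro i
      have h1 := bigO_prod (d := d) Finset.univ (fun t ξ => Ev ξ (dl (j i t)))
        (fun t _ => dl_bigO (j i t))
      rw [Finset.card_univ, Fintype.card_fin] at h1
      have h2 : (fun ξ : Fin d → ℝ => ∏ t, Ev ξ (dl (j i t)))
          = fun ξ => Ev ξ (P i) := funext fun ξ => (hEvP i ξ).symm
      rwa [h2] at h1
    have hEvb' : ∀ i (ξ : Fin d → ℝ), Ev ξ (b' i) = Ev ξ (b i) - β i := by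
      intro i ξ
      rw [hb']
      simp only [_root_.map_sub, _root_.map_smul, _root_.map_one, smul_eq_mul, mul_one]
    have hb'O : ∀ i, (fun ξ : Fin d → ℝ => Ev ξ (b' i)) =O[nhds 0] fun ξ => ‖ξ‖ := by
      intro i
      have h1 := ((diff_Ev (b i)) 0).isBigO_sub
      have h2 : (fun ξ : Fin d → ℝ => Ev ξ (b' i)) = fun ξ => Ev ξ (b i) - Ev 0 (b i) := by
        funext ξ; rw [hEvb' i ξ, hβ]
      rw [h2]
      exact h1.trans hid_bigO
    -- Σ β i * Ev (P i) is O(‖ξ‖^{n+1})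
    have hβP : (fun ξ : Fin d → ℝ => ∑ i, β i * Ev ξ (P i))
        =O[nhds 0] fun ξ => ‖ξ‖ ^ (n+1) := by
      have hdec : (fun ξ : Fin d → ℝ => ∑ i, β i * Ev ξ (P i))
          = fun ξ => Ev ξ f - ∑ i, Ev ξ (P i) * Ev ξ (b' i) := by
        funext ξ
        rw [hfe, _root_.map_sum, ← Finset.sum_sub_distrib]
        refine Finset.sum_congr rfl fun i _ => ?_
        rw [_root_.map_mul, hEvb' i ξ]
        ring
      rw [hdec]
      apply IsBigO.sub hf
      have : ∀ i : Fin N, (fun ξ : Fin d → ℝ => Ev ξ (P i) * Ev ξ (b' i))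
          =O[nhds 0] fun ξ => ‖ξ‖ ^ (n+1) := by
        intro i
        have := (hPO i).mul (hb'O i)
        have hpow : (fun ξ : Fin d → ℝ => ‖ξ‖ ^ n * ‖ξ‖) = fun ξ => ‖ξ‖ ^ (n+1) := by
          funext ξ; rw [pow_succ]
        rwa [hpow] at this
      exact IsBigO.fun_sum fun i _ => this i
    -- telescoping
    have htel : ∀ i, (fun ξ : Fin d → ℝ =>
        Ev ξ (P i) - ∏ t, (-Complex.I * ((ξ (j i t) : ℝ) : ℂ)))
        =O[nhds 0] fun ξ => ‖ξ‖ ^ (n+1) := by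
      intro i
      have h1 := bigO_prod_sub_prod (d := d) Finset.univ
        (fun t ξ => Ev ξ (dl (j i t))) (fun t ξ => -Complex.I * ((ξ (j i t) : ℝ) : ℂ))
        (fun t _ => dl_bigO (j i t)) (fun t _ => mono_bigO (j i t))
        (fun t _ => dl_taylor (j i t))
      rw [Finset.card_univ, Fintype.card_fin] at h1
      have h2 : (fun ξ : Fin d → ℝ =>
          (∏ t, Ev ξ (dl (j i t))) - ∏ t, (-Complex.I * ((ξ (j i t) : ℝ) : ℂ)))
          = fun ξ => Ev ξ (P i) - ∏ t, (-Complex.I * ((ξ (j i t) : ℝ) : ℂ)) := by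
        funext ξ; rw [hEvP i ξ]
      rwa [h2] at h1
    -- Q is O(‖ξ‖^{n+1})
    have hQ : (fun ξ : Fin d → ℝ => ∑ i, β i * ∏ t, (-Complex.I * ((ξ (j i t) : ℝ) : ℂ)))
        =O[nhds 0] fun ξ => ‖ξ‖ ^ (n+1) := by
      have hdec : (fun ξ : Fin d → ℝ => ∑ i, β i * ∏ t, (-Complex.I * ((ξ (j i t) : ℝ) : ℂ)))
          = fun ξ => (∑ i, β i * Ev ξ (P i))
            - ∑ i, β i * (Ev ξ (P i) - ∏ t, (-Complex.I * ((ξ (j i t) : ℝ) : ℂ))) := by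
        funext ξ
        rw [← Finset.sum_sub_distrib]
        refine Finset.sum_congr rfl fun i _ => ?_
        ring
      rw [hdec]
      apply IsBigO.sub hβP
      exact IsBigO.fun_sum fun i _ => (htel i).const_mul_left (β i)
    -- pull out (-I)^n
    have hQ0 : (fun ξ : Fin d → ℝ => ∑ i, β i * ∏ t, ((ξ (j i t) : ℝ) : ℂ))
        =O[nhds 0] fun ξ => ‖ξ‖ ^ (n+1) := by
      have hsplit : ∀ (ξ : Fin d → ℝ) (i : Fin N),
          ∏ t, (-Complex.I * ((ξ (j i t) : ℝ) : ℂ))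
          = (-Complex.I)^n * ∏ t, ((ξ (j i t) : ℝ) : ℂ) := by
        intro ξ i
        rw [Finset.prod_mul_distrib, Finset.prod_const, Finset.card_univ, Fintype.card_fin]
      have h1 : (fun ξ : Fin d → ℝ => ∑ i, β i * ∏ t, (-Complex.I * ((ξ (j i t) : ℝ) : ℂ)))
          = fun ξ => (-Complex.I)^n * ∑ i, β i * ∏ t, ((ξ (j i t) : ℝ) : ℂ) := by
        funext ξ
        rw [Finset.mul_sum]
        refine Finset.sum_congr rfl fun i _ => ?_
        rw [hsplit ξ i]
        ring
      rw [h1] at hQ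
      have hne : (-Complex.I)^n ≠ 0 := by
        apply pow_ne_zero
        simp [Complex.I_ne_zero]
      exact (isBigO_const_mul_left_iff hne).1 hQ
    have hzero := homog_zero n j β hQ0
    have hkey : ∑ i, β i • P i = 0 := by
      have := sum_smul_prod_dl_eq_zero n j β hzero
      rw [hP]
      exact this
    have hfe2 : f = ∑ i, P i * b' i := by
      rw [hfe]
      have h1 : ∀ i : Fin N, P i * b i = P i * b' i + β i • P i := by
        intro i
        have : b i = b' i + β i • 1 := by rw [hb']; simp
        rw [this, mul_add, mul_smul_comm, mul_one]
      rw [Finset.sum_congr rfl fun i _ => h1 i, Finset.sum_add_distrib, hkey, add_zero]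
    have hfac : ∀ i, ∃ r : Fin d → RR d, b' i = ∑ s, dl s * r s := by
      intro i
      apply exists_dl_factor
      rw [hEvb' i 0, hβ, sub_self]
    choose r hr using hfac
    refine ⟨N * d,
      fun i => Fin.snoc (j (finProdFinEquiv.symm i).1) ((finProdFinEquiv.symm i).2),
      fun i => r (finProdFinEquiv.symm i).1 ((finProdFinEquiv.symm i).2), ?_⟩
    have hre : ∑ i : Fin (N * d),
        (∏ t, dl ((Fin.snoc (j (finProdFinEquiv.symm i).1) ((finProdFinEquiv.symm i).2) : Fin (n+1) → Fin d) t))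
          * r (finProdFinEquiv.symm i).1 ((finProdFinEquiv.symm i).2)
        = ∑ p : Fin N × Fin d,
        (∏ t, dl ((Fin.snoc (j p.1) p.2 : Fin (n+1) → Fin d) t)) * r p.1 p.2 := by
      rw [← Equiv.sum_comp finProdFinEquiv
        (fun q : Fin (N*d) => (∏ t, dl ((Fin.snoc (j (finProdFinEquiv.symm q).1)
          ((finProdFinEquiv.symm q).2) : Fin (n+1) → Fin d) t)) * r (finProdFinEquiv.symm q).1
          ((finProdFinEquiv.symm q).2))]
      refine Finset.sum_congr rfl fun p _ => ?_
      rw [Equiv.symm_apply_apply]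
    rw [hre]
    have hsnoc : ∀ (i : Fin N) (s : Fin d),
        (∏ t, dl ((Fin.snoc (j i) s : Fin (n+1) → Fin d) t) : RR d) = P i * dl s := by
      intro i s
      rw [Fin.prod_univ_castSucc]
      congr 1
      · rw [hP]
        refine Finset.prod_congr rfl fun t _ => ?_
        rw [Fin.snoc_castSucc]
      · rw [Fin.snoc_last]
    rw [Fintype.sum_prod_type]
    rw [hfe2]
    refine Finset.sum_congr rfl fun i _ => ?_
    rw [hr i, Finset.mul_sum]
    refine Finset.sum_congr rfl fun s _ => ?_
    rw [hsnoc i s]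
    ring


lemma conj_factor (x : ℝ) :
    (-1 : ℂ) * Complex.exp (-Complex.I * x) * (starRingEnd ℂ) (Complex.exp (-Complex.I * x) - 1)
      = Complex.exp (-Complex.I * x) - 1 := by
  have h1 : (starRingEnd ℂ) (Complex.exp (-Complex.I * x) - 1)
      = Complex.exp (Complex.I * x) - 1 := by
    rw [_root_.map_sub, _root_.map_one, ← Complex.exp_conj, _root_.map_mul, map_neg,
      Complex.conj_I, Complex.conj_ofReal, neg_neg]
  rw [h1]
  have h2 : Complex.exp (-Complex.I * x) * Complex.exp (Complex.I * x) = 1 := by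
    rw [← Complex.exp_add]
    norm_num
  linear_combination -h2

lemma conj_trick (mm : ℕ) (s : Fin mm → Fin d) (ξ : Fin d → ℝ) :
    Ev ξ ((-1 : RR d)^mm * ∏ t, AddMonoidAlgebra.single (ej (s t)) (1:ℂ))
      * (starRingEnd ℂ) (Ev ξ (∏ t, dl (s t)))
    = Ev ξ (∏ t, dl (s t)) := by
  rw [_root_.map_mul, map_pow, map_neg, _root_.map_one, _root_.map_prod, _root_.map_prod,
    _root_.map_prod]
  have hstep : ∀ t : Fin mm,
      (-1 : ℂ) * Ev ξ (AddMonoidAlgebra.single (ej (s t)) (1:ℂ))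
        * (starRingEnd ℂ) (Ev ξ (dl (s t))) = Ev ξ (dl (s t)) := by
    intro t
    rw [Ev_single, one_mul, phase_ej, Ev_dl]
    exact conj_factor (ξ (s t))
  calc (-1:ℂ)^mm * (∏ t, Ev ξ (AddMonoidAlgebra.single (ej (s t)) (1:ℂ)))
        * ∏ t, (starRingEnd ℂ) (Ev ξ (dl (s t)))
      = ∏ t, ((-1 : ℂ) * Ev ξ (AddMonoidAlgebra.single (ej (s t)) (1:ℂ))
          * (starRingEnd ℂ) (Ev ξ (dl (s t)))) := by
        rw [Finset.prod_mul_distrib, Finset.prod_mul_distrib, Finset.prod_const,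
          Finset.card_univ, Fintype.card_fin]
    _ = ∏ t, Ev ξ (dl (s t)) := Finset.prod_congr rfl fun t _ => hstep t

lemma bigO_prod_dl (mm : ℕ) (s : Fin mm → Fin d) :
    (fun ξ : Fin d → ℝ => Ev ξ (∏ t, dl (s t))) =O[nhds 0] fun ξ => ‖ξ‖ ^ mm := by
  have h1 := bigO_prod (d := d) Finset.univ (fun t ξ => Ev ξ (dl (s t)))
    (fun t _ => dl_bigO (s t))
  rw [Finset.card_univ, Fintype.card_fin] at h1
  have h2 : (fun ξ : Fin d → ℝ => ∏ t, Ev ξ (dl (s t)))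
      = fun ξ => Ev ξ (∏ t, dl (s t)) := by
    funext ξ
    exact (_root_.map_prod _ _ _).symm
  rwa [h2] at h1

end S16

/-- quasi-tight factorization lemma: a Hermitian trigonometric polynomial
vanishing to order `2m` at `0` splits as `∑ ε_l |û_l|²` with each `û_l = O(‖ξ‖^m)`. -/
theorem stmt16 {d : ℕ} (A : (Fin d → ℤ) → ℂ) (hA : (Function.support A).Finite)
    (hherm : ∀ ξ : Fin d → ℝ, (starRingEnd ℂ) (fhat A ξ) = fhat A ξ)
    (m : ℕ)
    (hvan : (fun ξ : Fin d → ℝ => fhat A ξ) =O[nhds (0 : Fin d → ℝ)] fun ξ => ‖ξ‖ ^ (2 * m)) :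
    ∃ (t : ℕ) (u : Fin t → ((Fin d → ℤ) → ℂ)) (ε : Fin t → ℂ),
      (∀ l, ε l = 1 ∨ ε l = -1) ∧
      (∀ l, (Function.support (u l)).Finite) ∧
      (∀ ξ : Fin d → ℝ,
        fhat A ξ = ∑ l : Fin t, ε l * ((starRingEnd ℂ) (fhat (u l) ξ) * fhat (u l) ξ)) ∧
      (∀ l, (fun ξ : Fin d → ℝ => fhat (u l) ξ) =O[nhds (0 : Fin d → ℝ)]
        fun ξ => ‖ξ‖ ^ m) := by
  classical
  set A' : S16.RR d := AddMonoidAlgebra.ofCoeff (Finsupp.ofSupportFinite A hA) with hA'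
  have hcoe : ⇑A'.coeff = A := rfl
  have hfA : ∀ ξ : Fin d → ℝ, fhat A ξ = S16.Ev ξ A' := by
    intro ξ
    rw [← hcoe]
    exact S16.fhat_eq A' ξ
  have hvan' : (fun ξ : Fin d → ℝ => S16.Ev ξ A')
      =O[nhds (0 : Fin d → ℝ)] fun ξ => ‖ξ‖ ^ (m + m) := by
    have hfun : (fun ξ : Fin d → ℝ => fhat A ξ) = fun ξ => S16.Ev ξ A' := funext hfA
    have h2 : 2 * m = m + m := two_mul m
    rw [← hfun, ← h2]
    exact hvan
  obtain ⟨N, j, b, hdec⟩ := S16.decomp (m + m) A' hvan'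
  set F : Fin N → S16.RR d := fun i => ∏ t : Fin m, S16.dl (j i (Fin.castAdd m t)) with hF
  set G : Fin N → S16.RR d := fun i => ∏ t : Fin m, S16.dl (j i (Fin.natAdd m t)) with hG
  set τ : Fin N → S16.RR d := fun i =>
    (-1 : S16.RR d)^m
      * ∏ t : Fin m, AddMonoidAlgebra.single (S16.ej (j i (Fin.natAdd m t))) (1:ℂ) with hτ
  set ff : Fin N → S16.RR d := fun i => F i * b i * τ i with hff
  -- conj trick
  have hconjG : ∀ (i : Fin N) (ξ : Fin d → ℝ),
      S16.Ev ξ (τ i) * (starRingEnd ℂ) (S16.Ev ξ (G i)) = S16.Ev ξ (G i) := by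
    intro i ξ
    exact S16.conj_trick m (fun t => j i (Fin.natAdd m t)) ξ
  -- split products
  have hsplit : ∀ i : Fin N, (∏ t : Fin (m + m), S16.dl (j i t)) = F i * G i := by
    intro i
    rw [Fin.prod_univ_add]
  have hEvA : ∀ ξ : Fin d → ℝ,
      S16.Ev ξ A' = ∑ i, S16.Ev ξ (ff i) * (starRingEnd ℂ) (S16.Ev ξ (G i)) := by
    intro ξ
    rw [hdec, _root_.map_sum]
    refine Finset.sum_congr rfl fun i _ => ?_
    rw [hsplit i, hff]
    simp only [_root_.map_mul]
    calc S16.Ev ξ (F i) * S16.Ev ξ (G i) * S16.Ev ξ (b i)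
        = S16.Ev ξ (F i) * S16.Ev ξ (b i)
            * (S16.Ev ξ (τ i) * (starRingEnd ℂ) (S16.Ev ξ (G i))) := by
          rw [hconjG i ξ]; ring
      _ = S16.Ev ξ (F i) * S16.Ev ξ (b i) * S16.Ev ξ (τ i)
            * (starRingEnd ℂ) (S16.Ev ξ (G i)) := by ring
  -- define filters
  set uu : Fin N × Bool → S16.RR d := fun p =>
    if p.2 then (2⁻¹ : ℂ) • (ff p.1 + G p.1) else (2⁻¹ : ℂ) • (ff p.1 - G p.1) with huu
  set εs : Fin N × Bool → ℂ := fun p => if p.2 then 1 else -1 with hεs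
  have hermc : ∀ ξ : Fin d → ℝ, (starRingEnd ℂ) (S16.Ev ξ A') = S16.Ev ξ A' := by
    intro ξ
    rw [← hfA]
    exact hherm ξ
  have key : ∀ ξ : Fin d → ℝ,
      (∑ p : Fin N × Bool, εs p * ((starRingEnd ℂ) (S16.Ev ξ (uu p)) * S16.Ev ξ (uu p)))
        = S16.Ev ξ A' := by
    intro ξ
    rw [Fintype.sum_prod_type]
    have hper : ∀ i : Fin N,
        (∑ bb : Bool, εs (i, bb) * ((starRingEnd ℂ) (S16.Ev ξ (uu (i, bb))) * S16.Ev ξ (uu (i, bb))))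
        = 2⁻¹ * (S16.Ev ξ (ff i) * (starRingEnd ℂ) (S16.Ev ξ (G i))
            + (starRingEnd ℂ) (S16.Ev ξ (ff i)) * S16.Ev ξ (G i)) := by
      intro i
      have ht : uu (i, true) = (2⁻¹ : ℂ) • (ff i + G i) := by simp [huu]
      have hf2 : uu (i, false) = (2⁻¹ : ℂ) • (ff i - G i) := by simp [huu]
      have hεt : εs (i, true) = 1 := by simp [hεs]
      have hεf : εs (i, false) = -1 := by simp [hεs]
      have e1 : S16.Ev ξ ((2⁻¹ : ℂ) • (ff i + G i))
          = 2⁻¹ * (S16.Ev ξ (ff i) + S16.Ev ξ (G i)) := by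
        rw [_root_.map_smul, _root_.map_add, smul_eq_mul]
      have e2 : S16.Ev ξ ((2⁻¹ : ℂ) • (ff i - G i))
          = 2⁻¹ * (S16.Ev ξ (ff i) - S16.Ev ξ (G i)) := by
        rw [_root_.map_smul, _root_.map_sub, smul_eq_mul]
      have hc2 : (starRingEnd ℂ) ((2⁻¹ : ℂ)) = 2⁻¹ := by
        rw [map_inv₀, map_ofNat]
      rw [Fintype.sum_bool, hεt, hεf, ht, hf2, e1, e2]
      simp only [_root_.map_mul, _root_.map_add, _root_.map_sub, hc2]
      ring
    rw [Finset.sum_congr rfl fun i _ => hper i]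
    rw [← Finset.mul_sum, Finset.sum_add_distrib]
    have h1 : ∑ i, S16.Ev ξ (ff i) * (starRingEnd ℂ) (S16.Ev ξ (G i)) = S16.Ev ξ A' :=
      (hEvA ξ).symm
    have h2 : ∑ i, (starRingEnd ℂ) (S16.Ev ξ (ff i)) * S16.Ev ξ (G i) = S16.Ev ξ A' := by
      have := congrArg (starRingEnd ℂ) h1
      rw [_root_.map_sum] at this
      rw [← hermc ξ, ← this]
      refine Finset.sum_congr rfl fun i _ => ?_
      simp
    rw [h1, h2]
    ring
  -- big-O bounds
  have hGO : ∀ i : Fin N, (fun ξ : Fin d → ℝ => S16.Ev ξ (G i))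
      =O[nhds (0 : Fin d → ℝ)] fun ξ => ‖ξ‖ ^ m := by
    intro i
    rw [hG]
    exact S16.bigO_prod_dl m _
  have hffO : ∀ i : Fin N, (fun ξ : Fin d → ℝ => S16.Ev ξ (ff i))
      =O[nhds (0 : Fin d → ℝ)] fun ξ => ‖ξ‖ ^ m := by
    intro i
    have hFO : (fun ξ : Fin d → ℝ => S16.Ev ξ (F i))
        =O[nhds (0 : Fin d → ℝ)] fun ξ => ‖ξ‖ ^ m := by
      rw [hF]
      exact S16.bigO_prod_dl m _
    have h1 := (hFO.mul (S16.Ev_isBigO_one (b i))).mul (S16.Ev_isBigO_one (τ i))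
    have h2 : (fun ξ : Fin d → ℝ => S16.Ev ξ (F i) * S16.Ev ξ (b i) * S16.Ev ξ (τ i))
        = fun ξ => S16.Ev ξ (ff i) := by
      funext ξ
      rw [hff]
      simp only [_root_.map_mul]
    have h3 : (fun ξ : Fin d → ℝ => ‖ξ‖ ^ m * 1 * 1) = fun ξ => ‖ξ‖ ^ m := by
      funext ξ; ring
    rw [h2, h3] at h1
    exact h1
  have huuO : ∀ p : Fin N × Bool, (fun ξ : Fin d → ℝ => S16.Ev ξ (uu p))
      =O[nhds (0 : Fin d → ℝ)] fun ξ => ‖ξ‖ ^ m := by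
    rintro ⟨i, bb⟩
    cases bb
    · have h1 := (hffO i).sub (hGO i)
      have h2 : (fun ξ : Fin d → ℝ => S16.Ev ξ (uu (i, false)))
          = fun ξ => 2⁻¹ * (S16.Ev ξ (ff i) - S16.Ev ξ (G i)) := by
        funext ξ
        have : uu (i, false) = (2⁻¹ : ℂ) • (ff i - G i) := by simp [huu]
        rw [this, _root_.map_smul, _root_.map_sub, smul_eq_mul]
      rw [h2]
      exact h1.const_mul_left _
    · have h1 := (hffO i).add (hGO i)
      have h2 : (fun ξ : Fin d → ℝ => S16.Ev ξ (uu (i, true)))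
          = fun ξ => 2⁻¹ * (S16.Ev ξ (ff i) + S16.Ev ξ (G i)) := by
        funext ξ
        have : uu (i, true) = (2⁻¹ : ℂ) • (ff i + G i) := by simp [huu]
        rw [this, _root_.map_smul, _root_.map_add, smul_eq_mul]
      rw [h2]
      exact h1.const_mul_left _
  -- final packaging
  set e : Fin (Fintype.card (Fin N × Bool)) ≃ Fin N × Bool := (Fintype.equivFin _).symm with he
  refine ⟨Fintype.card (Fin N × Bool), fun l => ⇑(uu (e l)).coeff, fun l => εs (e l), ?_, ?_, ?_, ?_⟩
  · intro l
    rcases hl : e l with ⟨i, bb⟩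
    cases bb
    · right; simp [hεs, hl]
    · left; simp [hεs, hl]
  · intro l
    exact Finsupp.finite_support _
  · intro ξ
    have hft : ∀ q : Fin N × Bool, fhat (⇑(uu q).coeff) ξ = S16.Ev ξ (uu q) := fun q =>
      S16.fhat_eq (uu q) ξ
    calc fhat A ξ = S16.Ev ξ A' := hfA ξ
      _ = ∑ p : Fin N × Bool, εs p * ((starRingEnd ℂ) (S16.Ev ξ (uu p)) * S16.Ev ξ (uu p)) :=
          (key ξ).symm
      _ = ∑ l : Fin (Fintype.card (Fin N × Bool)),
            εs (e l) * ((starRingEnd ℂ) (S16.Ev ξ (uu (e l))) * S16.Ev ξ (uu (e l))) :=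
          (Equiv.sum_comp e fun p =>
            εs p * ((starRingEnd ℂ) (S16.Ev ξ (uu p)) * S16.Ev ξ (uu p))).symm
      _ = ∑ l, εs (e l) * ((starRingEnd ℂ) (fhat (⇑(uu (e l)).coeff) ξ) * fhat (⇑(uu (e l)).coeff) ξ) := by
          refine Finset.sum_congr rfl fun l _ => ?_
          rw [hft]
  · intro l
    have h1 : (fun ξ : Fin d → ℝ => fhat (⇑(uu (e l)).coeff) ξ)
        = fun ξ => S16.Ev ξ (uu (e l)) := funext fun ξ => S16.fhat_eq (uu (e l)) ξ
    rw [h1]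
    exact huuO (e l)
end
end
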